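/- arXiv:math/0310157 — 6 statements merged into one kernel-verified Lean document; each statement's English description precedes it below -/
import Mathlib

section
/- The map sending a permutation of [n] to the list of reduced (unlabeled) forms of its restrictions to its components is a bijection between permutations of [n] and lists of connected permutations whose lengths sum to n. -/
def Stab {n : ℕ} (σ : Equiv.Perm (Fin n)) (S : Finset (Fin n)) : Prop :=
  S.image σ = S

/-- `σ` is connected: it stabilizes no proper nonempty initial interval of `[n]`. -/
def ConnectedP {m : ℕ} (τ : Equiv.Perm (Fin m)) : Prop :=
  ∀ k : ℕ, 1 ≤ k → k < m → ¬ Stab τ (Finset.univ.filter (fun i => (i : ℕ) < k))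

/-- The sorted list of cut points of the finest partition of `[n]` into consecutive intervals
stabilized by `σ`: these are exactly the `k ∈ [0, n]` such that `σ` stabilizes the initial
segment of size `k`.  Consecutive entries delimit the components of `σ`. -/
def cutList {n : ℕ} (σ : Equiv.Perm (Fin n)) : List ℕ :=
  ((Finset.range (n + 1)).filter
    (fun k => ∀ i : Fin n, (i : ℕ) < k → ((σ i : ℕ) < k))).sort (· ≤ ·)

/-- Lists of (unlabeled) connected permutations whose lengths sum to `n`. -/
def ConnList (n : ℕ) :=
  {L : List (Σ m : ℕ, Equiv.Perm (Fin m)) //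
    (∀ p ∈ L, 1 ≤ p.1 ∧ ConnectedP p.2) ∧ (L.map (fun p => p.1)).sum = n}

namespace Stmt4Aux

def IsCut {n : ℕ} (σ : Equiv.Perm (Fin n)) (k : ℕ) : Prop :=
  ∀ i : Fin n, (i : ℕ) < k → ((σ i : ℕ) < k)

instance {n : ℕ} (σ : Equiv.Perm (Fin n)) : DecidablePred (IsCut σ) :=
  fun _ => Fintype.decidableForallFintype

lemma stab_iff {m : ℕ} (τ : Equiv.Perm (Fin m)) (k : ℕ) :
    Stab τ (Finset.univ.filter fun i => (i : ℕ) < k) ↔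
      ∀ i : Fin m, (i : ℕ) < k → ((τ i : ℕ) < k) := by
  constructor
  · intro h i hi
    have hmem : τ i ∈ (Finset.univ.filter fun i : Fin m => (i : ℕ) < k) := by
      rw [← h]
      exact Finset.mem_image_of_mem τ (by simp [hi])
    simpa using hmem
  · intro h
    apply Finset.eq_of_subset_of_card_le
    · intro x hx
      simp only [Finset.mem_image, Finset.mem_filter, Finset.mem_univ, true_and] at hx ⊢
      obtain ⟨i, hi, rfl⟩ := hx
      exact h i hi
    · rw [Finset.card_image_of_injective _ τ.injective]

lemma isCut_iff {n : ℕ} {σ : Equiv.Perm (Fin n)} {c : ℕ} (hc : IsCut σ c) (i : Fin n) :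
    ((σ i : Fin n) : ℕ) < c ↔ (i : ℕ) < c := by
  constructor
  · intro h
    have hs : Stab σ (Finset.univ.filter fun j : Fin n => (j : ℕ) < c) := (stab_iff σ c).mpr hc
    have hmem : σ i ∈ (Finset.univ.filter fun j : Fin n => (j : ℕ) < c).image σ := by
      rw [hs]; simp [h]
    obtain ⟨j, hj, hji⟩ := Finset.mem_image.mp hmem
    have hji' := σ.injective hji
    subst hji'
    simpa using hj
  · exact hc i

/-! ### low part -/

def lowFun {n : ℕ} (σ : Equiv.Perm (Fin n)) (c : ℕ) (hc : IsCut σ c) (hcn : c ≤ n) :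
    Fin c → Fin c :=
  fun y => ⟨(σ ⟨(y : ℕ), by omega⟩ : Fin n), hc _ y.2⟩

lemma lowFun_val {n : ℕ} (σ : Equiv.Perm (Fin n)) (c : ℕ) (hc : IsCut σ c) (hcn : c ≤ n)
    (y : Fin c) (h : (y : ℕ) < n) :
    ((lowFun σ c hc hcn y : Fin c) : ℕ) = ((σ ⟨(y : ℕ), h⟩ : Fin n) : ℕ) := rfl

noncomputable def lowPerm {n : ℕ} (σ : Equiv.Perm (Fin n)) (c : ℕ) (hc : IsCut σ c)
    (hcn : c ≤ n) : Equiv.Perm (Fin c) :=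
  Equiv.ofBijective (lowFun σ c hc hcn) (Finite.injective_iff_bijective.mp (by
    intro a b hab
    have ha : (a : ℕ) < n := by omega
    have hb : (b : ℕ) < n := by omega
    have h1 := congrArg Fin.val hab
    rw [lowFun_val σ c hc hcn a ha, lowFun_val σ c hc hcn b hb] at h1
    have h2 := σ.injective (Fin.ext h1)
    have h3 := congrArg Fin.val h2
    exact Fin.ext (by simpa using h3)))

lemma lowPerm_apply {n : ℕ} (σ : Equiv.Perm (Fin n)) (c : ℕ) (hc : IsCut σ c) (hcn : c ≤ n)
    (y : Fin c) (i : Fin n) (hi : (i : ℕ) = (y : ℕ)) :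
    ((lowPerm σ c hc hcn y : Fin c) : ℕ) = ((σ i : Fin n) : ℕ) := by
  have h : (y : ℕ) < n := by omega
  have h' : (⟨(y : ℕ), h⟩ : Fin n) = i := Fin.ext (by simpa using hi.symm)
  rw [show lowPerm σ c hc hcn y = lowFun σ c hc hcn y from rfl, lowFun_val σ c hc hcn y h, h']

/-! ### high part -/

def highFun {n : ℕ} (σ : Equiv.Perm (Fin n)) (c : ℕ) : Fin (n - c) → Fin (n - c) :=
  fun y =>
    let i : Fin n := ⟨c + (y : ℕ), by omega⟩
    ⟨((σ i : Fin n) : ℕ) - c, by have h1 := (σ i).2; have h2 := y.2; omega⟩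

lemma highFun_val {n : ℕ} (σ : Equiv.Perm (Fin n)) (c : ℕ) (y : Fin (n - c))
    (h : c + (y : ℕ) < n) :
    ((highFun σ c y : Fin (n - c)) : ℕ) = ((σ ⟨c + (y : ℕ), h⟩ : Fin n) : ℕ) - c := rfl

noncomputable def highPerm {n : ℕ} (σ : Equiv.Perm (Fin n)) (c : ℕ) (hc : IsCut σ c) :
    Equiv.Perm (Fin (n - c)) :=
  Equiv.ofBijective (highFun σ c) (Finite.injective_iff_bijective.mp (by
    intro a b hab
    have ha : c + (a : ℕ) < n := by omega
    have hb : c + (b : ℕ) < n := by omega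
    have h1 := congrArg Fin.val hab
    rw [highFun_val σ c a ha, highFun_val σ c b hb] at h1
    have h2 : c ≤ ((σ ⟨c + (a : ℕ), ha⟩ : Fin n) : ℕ) := by
      by_contra h
      have := (isCut_iff hc ⟨c + (a : ℕ), ha⟩).mp (by omega)
      simp only [Fin.val_mk] at this
      omega
    have h3 : c ≤ ((σ ⟨c + (b : ℕ), hb⟩ : Fin n) : ℕ) := by
      by_contra h
      have := (isCut_iff hc ⟨c + (b : ℕ), hb⟩).mp (by omega)
      simp only [Fin.val_mk] at this
      omega
    have h4 : (σ ⟨c + (a : ℕ), ha⟩ : Fin n) = σ ⟨c + (b : ℕ), hb⟩ := Fin.ext (by omega)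
    have h5 := congrArg Fin.val (σ.injective h4)
    simp only [Fin.val_mk] at h5
    exact Fin.ext (by omega)))

lemma highPerm_apply {n : ℕ} (σ : Equiv.Perm (Fin n)) (c : ℕ) (hc : IsCut σ c)
    (y : Fin (n - c)) (i : Fin n) (hi : (i : ℕ) = c + (y : ℕ)) :
    ((highPerm σ c hc y : Fin (n - c)) : ℕ) = ((σ i : Fin n) : ℕ) - c := by
  have h : c + (y : ℕ) < n := by omega
  have h' : (⟨c + (y : ℕ), h⟩ : Fin n) = i := Fin.ext (by simpa using hi.symm)
  rw [show highPerm σ c hc y = highFun σ c y from rfl, highFun_val σ c y h, h']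

lemma sigma_ge {n : ℕ} {σ : Equiv.Perm (Fin n)} {c : ℕ} (hc : IsCut σ c)
    (i : Fin n) (hi : c ≤ (i : ℕ)) : c ≤ ((σ i : Fin n) : ℕ) := by
  by_contra h
  have := (isCut_iff hc i).mp (by omega)
  omega

/-! ### gluing -/

def glueFun {a n : ℕ} (han : a ≤ n) (τ : Equiv.Perm (Fin a)) (ρ : Equiv.Perm (Fin (n - a)))
    (x : Fin n) : Fin n :=
  if h : (x : ℕ) < a then
    let j : Fin a := ⟨(x : ℕ), h⟩
    ⟨(τ j : Fin a), by have h1 := (τ j).2; omega⟩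
  else
    let j : Fin (n - a) := ⟨(x : ℕ) - a, by omega⟩
    ⟨a + (ρ j : Fin (n - a)), by have h1 := (ρ j).2; have h2 := x.2; omega⟩

lemma glueFun_val_lt {a n : ℕ} (han : a ≤ n) (τ : Equiv.Perm (Fin a))
    (ρ : Equiv.Perm (Fin (n - a))) (x : Fin n) (h : (x : ℕ) < a) :
    ((glueFun han τ ρ x : Fin n) : ℕ) = ((τ ⟨(x : ℕ), h⟩ : Fin a) : ℕ) := by
  simp only [glueFun]
  rw [dif_pos h]

lemma glueFun_val_ge {a n : ℕ} (han : a ≤ n) (τ : Equiv.Perm (Fin a))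
    (ρ : Equiv.Perm (Fin (n - a))) (x : Fin n) (h : ¬ ((x : ℕ) < a))
    (h2 : (x : ℕ) - a < n - a) :
    ((glueFun han τ ρ x : Fin n) : ℕ) = a + ((ρ ⟨(x : ℕ) - a, h2⟩ : Fin (n - a)) : ℕ) := by
  simp only [glueFun]
  rw [dif_neg h]

noncomputable def glue' {a n : ℕ} (han : a ≤ n) (τ : Equiv.Perm (Fin a))
    (ρ : Equiv.Perm (Fin (n - a))) : Equiv.Perm (Fin n) :=
  Equiv.ofBijective (glueFun han τ ρ) (Finite.injective_iff_bijective.mp (by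
    intro x y hxy
    have h1 := congrArg Fin.val hxy
    by_cases hx : (x : ℕ) < a <;> by_cases hy : (y : ℕ) < a
    · rw [glueFun_val_lt han τ ρ x hx, glueFun_val_lt han τ ρ y hy] at h1
      have h2 := congrArg Fin.val (τ.injective (Fin.ext h1))
      exact Fin.ext (by simpa using h2)
    · have hy2 : (y : ℕ) - a < n - a := by omega
      rw [glueFun_val_lt han τ ρ x hx, glueFun_val_ge han τ ρ y hy hy2] at h1
      omega
    · have hx2 : (x : ℕ) - a < n - a := by omega
      rw [glueFun_val_ge han τ ρ x hx hx2, glueFun_val_lt han τ ρ y hy] at h1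
      omega
    · have hx2 : (x : ℕ) - a < n - a := by omega
      have hy2 : (y : ℕ) - a < n - a := by omega
      rw [glueFun_val_ge han τ ρ x hx hx2, glueFun_val_ge han τ ρ y hy hy2] at h1
      have h2 : ((ρ ⟨(x : ℕ) - a, hx2⟩ : Fin (n - a)) : ℕ)
          = ((ρ ⟨(y : ℕ) - a, hy2⟩ : Fin (n - a)) : ℕ) := by omega
      have h3 := congrArg Fin.val (ρ.injective (Fin.ext h2))
      exact Fin.ext (by simp at h3; omega)))

lemma glue'_lt {a n : ℕ} (han : a ≤ n) (τ : Equiv.Perm (Fin a))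
    (ρ : Equiv.Perm (Fin (n - a))) (x : Fin n) (i : Fin a) (hi : (i : ℕ) = (x : ℕ)) :
    ((glue' han τ ρ x : Fin n) : ℕ) = ((τ i : Fin a) : ℕ) := by
  have h : (x : ℕ) < a := by omega
  have h' : (⟨(x : ℕ), h⟩ : Fin a) = i := Fin.ext (by simpa using hi.symm)
  rw [show glue' han τ ρ x = glueFun han τ ρ x from rfl, glueFun_val_lt han τ ρ x h, h']

lemma glue'_ge {a n : ℕ} (han : a ≤ n) (τ : Equiv.Perm (Fin a))
    (ρ : Equiv.Perm (Fin (n - a))) (x : Fin n) (hax : a ≤ (x : ℕ)) (i : Fin (n - a))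
    (hi : (i : ℕ) = (x : ℕ) - a) :
    ((glue' han τ ρ x : Fin n) : ℕ) = a + ((ρ i : Fin (n - a)) : ℕ) := by
  have h : ¬ ((x : ℕ) < a) := by omega
  have h2 : (x : ℕ) - a < n - a := by omega
  have h' : (⟨(x : ℕ) - a, h2⟩ : Fin (n - a)) = i := Fin.ext (by simpa using hi.symm)
  rw [show glue' han τ ρ x = glueFun han τ ρ x from rfl, glueFun_val_ge han τ ρ x h h2, h']

end Stmt4Aux

namespace Stmt4Aux

/-! ### first cut -/

lemma exists_cut {n : ℕ} (σ : Equiv.Perm (Fin n)) : ∃ k, 0 < k ∧ IsCut σ k :=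
  ⟨n + 1, Nat.succ_pos n, fun i _ => by have := (σ i).2; omega⟩

noncomputable def firstCut {n : ℕ} (σ : Equiv.Perm (Fin n)) : ℕ :=
  Nat.find (exists_cut σ)

lemma firstCut_pos {n : ℕ} (σ : Equiv.Perm (Fin n)) : 0 < firstCut σ :=
  (Nat.find_spec (exists_cut σ)).1

lemma firstCut_isCut {n : ℕ} (σ : Equiv.Perm (Fin n)) : IsCut σ (firstCut σ) :=
  (Nat.find_spec (exists_cut σ)).2

lemma firstCut_le {n : ℕ} (σ : Equiv.Perm (Fin n)) (hn : 0 < n) : firstCut σ ≤ n :=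
  Nat.find_le ⟨hn, fun i hi => (σ i).2⟩

lemma firstCut_min {n : ℕ} (σ : Equiv.Perm (Fin n)) {k : ℕ} (h0 : 0 < k)
    (hk : k < firstCut σ) : ¬ IsCut σ k :=
  fun h => Nat.find_min (exists_cut σ) hk ⟨h0, h⟩

/-! ### decomposition -/

noncomputable def decomp : (n : ℕ) → Equiv.Perm (Fin n) → List (Σ m : ℕ, Equiv.Perm (Fin m))
  | 0, _ => []
  | (n+1), σ =>
    ⟨firstCut σ, lowPerm σ (firstCut σ) (firstCut_isCut σ) (firstCut_le σ (Nat.succ_pos n))⟩ ::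
      decomp (n + 1 - firstCut σ) (highPerm σ (firstCut σ) (firstCut_isCut σ))
  termination_by n _ => n
  decreasing_by have := firstCut_pos σ; omega

lemma decomp_zero (σ : Equiv.Perm (Fin 0)) : decomp 0 σ = [] := by rw [decomp]

lemma decomp_succ (n : ℕ) (σ : Equiv.Perm (Fin (n+1))) :
    decomp (n+1) σ =
      ⟨firstCut σ, lowPerm σ (firstCut σ) (firstCut_isCut σ) (firstCut_le σ (Nat.succ_pos n))⟩ ::
        decomp (n + 1 - firstCut σ) (highPerm σ (firstCut σ) (firstCut_isCut σ)) := by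
  rw [decomp]

/-! ### gluing a list -/

noncomputable def glueList :
    (n : ℕ) → (L : List (Σ m : ℕ, Equiv.Perm (Fin m))) →
      ((L.map (fun p => p.1)).sum = n) → Equiv.Perm (Fin n)
  | _, [], _ => 1
  | n, p :: L, h =>
    glue' (a := p.1) (by simp at h; omega) p.2
      (glueList (n - p.1) L (by simp at h; omega))

lemma decomp_sum : ∀ (n : ℕ) (σ : Equiv.Perm (Fin n)),
    (((decomp n σ).map (fun p => p.1)).sum = n) := by
  intro n
  induction n using Nat.strong_induction_on with
  | _ n ih =>
    intro σ
    match n with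
    | 0 => rw [decomp_zero]; rfl
    | (m+1) =>
      rw [decomp_succ]
      have h1 := firstCut_pos σ
      have h2 := firstCut_le σ (Nat.succ_pos m)
      have h3 := ih (m + 1 - firstCut σ) (by omega) (highPerm σ (firstCut σ) (firstCut_isCut σ))
      simp only [List.map_cons, List.sum_cons, h3]
      omega


/-! ### left inverse -/

lemma glue_decomp : ∀ (n : ℕ) (σ : Equiv.Perm (Fin n))
    (h : (((decomp n σ).map (fun p => p.1)).sum = n)),
    glueList n (decomp n σ) h = σ := by
  intro n
  induction n using Nat.strong_induction_on with
  | _ n ih =>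
    intro σ h
    match n with
    | 0 => exact Subsingleton.elim _ _
    | (m+1) =>
      have hd := decomp_succ m σ
      revert h
      rw [hd]
      intro h
      rw [glueList]
      set c := firstCut σ with hcdef
      have h1 : 0 < c := firstCut_pos σ
      have h2 : c ≤ m + 1 := firstCut_le σ (Nat.succ_pos m)
      have hcut : IsCut σ c := firstCut_isCut σ
      rw [ih (m + 1 - c) (by omega) (highPerm σ c hcut)]
      apply Equiv.ext
      intro x
      apply Fin.ext
      by_cases hx : (x : ℕ) < c
      · rw [glue'_lt _ _ _ x ⟨(x : ℕ), hx⟩ rfl]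
        exact lowPerm_apply σ c hcut h2 ⟨(x : ℕ), hx⟩ x rfl
      · have hx2 : (x : ℕ) - c < m + 1 - c := by omega
        rw [glue'_ge _ _ _ x (by omega) ⟨(x : ℕ) - c, hx2⟩ rfl]
        rw [highPerm_apply σ c hcut ⟨(x : ℕ) - c, hx2⟩ x (by simp; omega)]
        have := sigma_ge hcut x (by omega)
        omega

/-! ### connectedness of the pieces -/

lemma decomp_conn : ∀ (n : ℕ) (σ : Equiv.Perm (Fin n))
    (p : Σ m : ℕ, Equiv.Perm (Fin m)), p ∈ decomp n σ → 1 ≤ p.1 ∧ ConnectedP p.2 := by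
  intro n
  induction n using Nat.strong_induction_on with
  | _ n ih =>
    intro σ p hp
    match n with
    | 0 => rw [decomp_zero] at hp; simp at hp
    | (m+1) =>
      rw [decomp_succ] at hp
      set c := firstCut σ with hcdef
      have h1 : 0 < c := firstCut_pos σ
      have h2 : c ≤ m + 1 := firstCut_le σ (Nat.succ_pos m)
      have hcut : IsCut σ c := firstCut_isCut σ
      rcases List.mem_cons.mp hp with hp | hp
      · subst hp
        refine ⟨h1, ?_⟩
        dsimp only
        intro k hk1 hkc hstab
        have hlow := (stab_iff _ k).mp hstab
        have : IsCut σ k := by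
          intro i hik
          have hic : (i : ℕ) < c := by omega
          have := hlow ⟨(i : ℕ), hic⟩ hik
          rwa [lowPerm_apply σ c hcut h2 ⟨(i : ℕ), hic⟩ i rfl] at this
        exact firstCut_min σ (by omega) (by omega) this
      · exact ih (m + 1 - c) (by omega) _ p hp


/-! ### congruence helpers -/

lemma sigma_perm_ext {a b : ℕ} (τ : Equiv.Perm (Fin a)) (ρ : Equiv.Perm (Fin b)) (h : a = b)
    (hv : ∀ x : Fin a, ((τ x : Fin a) : ℕ) = ((ρ ⟨(x : ℕ), h ▸ x.2⟩ : Fin b) : ℕ)) :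
    (⟨a, τ⟩ : Σ m : ℕ, Equiv.Perm (Fin m)) = ⟨b, ρ⟩ := by
  subst h
  congr 1
  apply Equiv.ext
  intro x
  apply Fin.ext
  simpa using hv x

lemma decomp_congr {a b : ℕ} (h : a = b) (τ : Equiv.Perm (Fin a)) (ρ : Equiv.Perm (Fin b))
    (hv : ∀ x : Fin a, ((τ x : Fin a) : ℕ) = ((ρ ⟨(x : ℕ), h ▸ x.2⟩ : Fin b) : ℕ)) :
    decomp a τ = decomp b ρ := by
  subst h
  have : τ = ρ := by
    apply Equiv.ext
    intro x
    apply Fin.ext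
    simpa using hv x
  rw [this]

/-! ### right inverse -/

lemma decomp_glue : ∀ (L : List (Σ m : ℕ, Equiv.Perm (Fin m))) (n : ℕ)
    (h : ((L.map (fun p => p.1)).sum = n))
    (hconn : ∀ p ∈ L, 1 ≤ p.1 ∧ ConnectedP p.2),
    decomp n (glueList n L h) = L := by
  intro L
  induction L with
  | nil =>
    intro n h _
    simp only [List.map_nil, List.sum_nil] at h
    subst h
    exact decomp_zero _
  | cons p L ih =>
    intro n h hconn
    have hp1 : 1 ≤ p.1 := (hconn p (List.mem_cons_self)).1
    have hsum : p.1 + (L.map (fun p => p.1)).sum = n := by simpa using h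
    obtain ⟨m, rfl⟩ : ∃ m, n = m + 1 := ⟨n - 1, by omega⟩
    rw [glueList]
    set ρ := glueList (m + 1 - p.1) L (by simp at h; omega) with hρdef
    set σ := glue' (a := p.1) (by simp at h; omega) p.2 ρ with hσdef
    have hA : p.1 ≤ m + 1 := by omega
    have hσlt : ∀ (x : Fin (m+1)) (i : Fin p.1), (i : ℕ) = (x : ℕ) →
        ((σ x : Fin (m+1)) : ℕ) = ((p.2 i : Fin p.1) : ℕ) :=
      fun x i hi => glue'_lt _ p.2 ρ x i hi
    have hσge : ∀ (x : Fin (m+1)), p.1 ≤ (x : ℕ) → ∀ (i : Fin (m+1-p.1)),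
        (i : ℕ) = (x : ℕ) - p.1 → ((σ x : Fin (m+1)) : ℕ) = p.1 + ((ρ i : Fin (m+1-p.1)) : ℕ) :=
      fun x hx i hi => glue'_ge _ p.2 ρ x hx i hi
    have hcut : IsCut σ p.1 := by
      intro i hi
      rw [hσlt i ⟨(i : ℕ), hi⟩ rfl]
      exact (p.2 ⟨(i : ℕ), hi⟩).2
    have hfc : firstCut σ = p.1 := by
      rw [firstCut, Nat.find_eq_iff]
      refine ⟨⟨by omega, hcut⟩, ?_⟩
      intro k hk
      rintro ⟨hk0, hkcut⟩
      refine (hconn p (List.mem_cons_self)).2 k hk0 hk ?_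
      apply (stab_iff _ k).mpr
      intro i hik
      have hi1 : (i : ℕ) < m + 1 := by omega
      have hlt := hkcut ⟨(i : ℕ), hi1⟩ hik
      rw [hσlt ⟨(i : ℕ), hi1⟩ ⟨(i : ℕ), by simpa using i.2⟩ rfl] at hlt
      have heq : (⟨(i : ℕ), by simpa using i.2⟩ : Fin p.1) = i := Fin.ext rfl
      rwa [heq] at hlt
    rw [decomp_succ]
    congr 1
    · apply sigma_perm_ext _ _ hfc
      intro x
      have hx1 : (x : ℕ) < m + 1 := by omega
      rw [lowPerm_apply σ (firstCut σ) (firstCut_isCut σ) (firstCut_le σ (Nat.succ_pos m))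
        x ⟨(x : ℕ), hx1⟩ rfl]
      rw [hσlt ⟨(x : ℕ), hx1⟩ ⟨(x : ℕ), by omega⟩ rfl]
    · refine Eq.trans ?_ (ih (m + 1 - p.1) (by simp at h; omega)
        (fun q hq => hconn q (List.mem_cons_of_mem p hq)))
      apply decomp_congr (by omega)
      intro x
      have hx' : (x : ℕ) < m + 1 - p.1 := by omega
      have hix : p.1 + (x : ℕ) < m + 1 := by omega
      rw [highPerm_apply σ (firstCut σ) (firstCut_isCut σ) x ⟨p.1 + (x : ℕ), hix⟩
        (by simp [hfc])]
      rw [hσge ⟨p.1 + (x : ℕ), hix⟩ (by simp) ⟨(x : ℕ), hx'⟩ (by simp)]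
      simp only [hfc, Nat.add_sub_cancel_left]
      rfl


/-! ### cutList lemmas -/

lemma mem_cutList {n : ℕ} (σ : Equiv.Perm (Fin n)) (k : ℕ) :
    k ∈ cutList σ ↔ k ≤ n ∧ IsCut σ k := by
  simp [cutList, Finset.mem_sort, Finset.mem_filter, Finset.mem_range, Nat.lt_succ_iff, IsCut]

lemma cutList_sorted {n : ℕ} (σ : Equiv.Perm (Fin n)) : (cutList σ).Pairwise (· < ·) :=
  (Finset.sortedLT_sort _).pairwise

lemma cutList_zero_mem {n : ℕ} (σ : Equiv.Perm (Fin n)) : 0 ∈ cutList σ :=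
  (mem_cutList σ 0).mpr ⟨Nat.zero_le _, fun i hi => absurd hi (by omega)⟩

lemma cutList_getZero {n : ℕ} (σ : Equiv.Perm (Fin n)) : (cutList σ)[0]? = some 0 := by
  cases e : cutList σ with
  | nil =>
    have := cutList_zero_mem σ
    rw [e] at this
    simp at this
  | cons hd t =>
    have hmem := cutList_zero_mem σ
    rw [e] at hmem
    have hs := cutList_sorted σ
    rw [e] at hs
    rcases List.mem_cons.mp hmem with h0 | h0
    · simp [← h0]
    · have := (List.pairwise_cons.mp hs).1 0 h0
      omega

lemma highCut_iff {n : ℕ} (σ : Equiv.Perm (Fin n)) (c : ℕ) (hc : IsCut σ c) (hcn : c ≤ n)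
    (k : ℕ) : IsCut (highPerm σ c hc) k ↔ IsCut σ (c + k) := by
  constructor
  · intro hk i hi
    by_cases hic : (i : ℕ) < c
    · have := hc i hic
      omega
    · have hi' : (i : ℕ) - c < n - c := by omega
      have hyk : ((⟨(i : ℕ) - c, hi'⟩ : Fin (n - c)) : ℕ) < k := by simp; omega
      have := hk ⟨(i : ℕ) - c, hi'⟩ hyk
      rw [highPerm_apply σ c hc ⟨(i : ℕ) - c, hi'⟩ i (by simp; omega)] at this
      have hge := sigma_ge hc i (by omega)
      omega
  · intro hk y hy
    have hix : c + (y : ℕ) < n := by omega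
    rw [highPerm_apply σ c hc y ⟨c + (y : ℕ), hix⟩ (by simp)]
    have := hk ⟨c + (y : ℕ), hix⟩ (by simp; omega)
    omega

lemma sorted_eq_of_mem_iff {l₁ l₂ : List ℕ} (h₁ : l₁.Pairwise (· < ·)) (h₂ : l₂.Pairwise (· < ·))
    (hm : ∀ x, x ∈ l₁ ↔ x ∈ l₂) : l₁ = l₂ := by
  apply List.Perm.eq_of_pairwise (fun a b _ _ hab hba => absurd hab (Nat.lt_asymm hba)) h₁ h₂
  apply List.perm_of_nodup_nodup_toFinset_eq h₁.nodup h₂.nodup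
  ext x
  simp [List.mem_toFinset, hm x]

lemma cutList_succ (m : ℕ) (σ : Equiv.Perm (Fin (m + 1))) :
    cutList σ = 0 ::
      (cutList (highPerm σ (firstCut σ) (firstCut_isCut σ))).map (firstCut σ + ·) := by
  set c := firstCut σ with hcdef
  have h1 : 0 < c := firstCut_pos σ
  have h2 : c ≤ m + 1 := firstCut_le σ (Nat.succ_pos m)
  have hcut : IsCut σ c := firstCut_isCut σ
  apply sorted_eq_of_mem_iff (cutList_sorted σ)
  · apply List.pairwise_cons.mpr
    constructor
    · intro b hb
      simp only [List.mem_map] at hb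
      obtain ⟨k, hk, rfl⟩ := hb
      omega
    · have := cutList_sorted (highPerm σ c hcut)
      exact List.Pairwise.map _ (fun a b hab => by omega) this
  · intro x
    rw [mem_cutList]
    simp only [List.mem_cons, List.mem_map]
    constructor
    · rintro ⟨hxn, hxcut⟩
      by_cases hx0 : x = 0
      · exact Or.inl hx0
      · right
        have hxc : c ≤ x := by
          by_contra hlt
          exact firstCut_min σ (by omega) (by omega) hxcut
        refine ⟨x - c, ?_, by omega⟩
        rw [mem_cutList]
        refine ⟨by omega, ?_⟩
        rw [highCut_iff σ c hcut h2]
        have : c + (x - c) = x := by omega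
        rw [this]
        exact hxcut
    · rintro (rfl | ⟨k, hk, rfl⟩)
      · exact ⟨by omega, fun i hi => absurd hi (by omega)⟩
      · rw [mem_cutList] at hk
        refine ⟨by omega, ?_⟩
        exact (highCut_iff σ c hcut h2 k).mp hk.2

lemma cutList_zero (σ : Equiv.Perm (Fin 0)) : cutList σ = [0] := by
  apply sorted_eq_of_mem_iff (cutList_sorted σ) (by simp)
  intro x
  rw [mem_cutList]
  simp only [List.mem_singleton]
  constructor
  · rintro ⟨hx, -⟩; omega
  · rintro rfl
    exact ⟨le_refl _, fun i hi => absurd hi (by omega)⟩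


/-! ### main spec -/

lemma spec : ∀ (n : ℕ) (σ : Equiv.Perm (Fin n)),
    (decomp n σ).length + 1 = (cutList σ).length ∧
    ∀ (j : ℕ) (hj : j < (decomp n σ).length) (cj cj1 : ℕ),
      (cutList σ)[j]? = some cj → (cutList σ)[j + 1]? = some cj1 →
        ((decomp n σ).get ⟨j, hj⟩).1 = cj1 - cj ∧
        ∀ x : Fin n, cj ≤ (x : ℕ) → (x : ℕ) < cj1 →
          ∃ y : Fin ((decomp n σ).get ⟨j, hj⟩).1,
            (y : ℕ) = (x : ℕ) - cj ∧
              ((((decomp n σ).get ⟨j, hj⟩).2 y : ℕ)) = (σ x : ℕ) - cj := by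
  intro n
  induction n using Nat.strong_induction_on with
  | _ n ih =>
    intro σ
    match n with
    | 0 =>
      rw [decomp_zero, cutList_zero]
      exact ⟨rfl, fun j hj => absurd hj (by simp)⟩
    | (m+1) =>
      have hd := decomp_succ m σ
      have hC := cutList_succ m σ
      have h1 : 0 < firstCut σ := firstCut_pos σ
      have h2 : firstCut σ ≤ m + 1 := firstCut_le σ (Nat.succ_pos m)
      have IH := ih (m + 1 - firstCut σ) (by omega) (highPerm σ (firstCut σ) (firstCut_isCut σ))
      rw [hd, hC]
      constructor
      · simp only [List.length_cons, List.length_map]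
        omega
      · intro j hj cj cj1 hcj hcj1
        cases j with
        | zero =>
          simp only [List.getElem?_cons_zero, Option.some.injEq] at hcj
          subst hcj
          rw [show (0 : ℕ) + 1 = 1 from rfl, List.getElem?_cons_succ, List.getElem?_map,
            cutList_getZero] at hcj1
          simp only [Option.map_some, Option.some.injEq] at hcj1
          subst hcj1
          refine ⟨by simp, ?_⟩
          intro x hx0 hxc
          have hxc' : (x : ℕ) < firstCut σ := by omega
          refine ⟨⟨(x : ℕ), hxc'⟩, by simp, ?_⟩
          simp only [List.get]
          rw [lowPerm_apply σ (firstCut σ) (firstCut_isCut σ) h2 ⟨(x : ℕ), hxc'⟩ x rfl]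
          omega
        | succ j' =>
          simp only [List.length_cons] at hj
          have hj' : j' < (decomp (m + 1 - firstCut σ)
              (highPerm σ (firstCut σ) (firstCut_isCut σ))).length := by omega
          rw [List.getElem?_cons_succ, List.getElem?_map] at hcj
          rw [List.getElem?_cons_succ, List.getElem?_map] at hcj1
          obtain ⟨a, ha, rfl⟩ := Option.map_eq_some_iff.mp hcj
          obtain ⟨b, hb, rfl⟩ := Option.map_eq_some_iff.mp hcj1
          have hbmem : b ∈ cutList (highPerm σ (firstCut σ) (firstCut_isCut σ)) := by
            obtain ⟨hjb, rfl⟩ := List.getElem?_eq_some_iff.mp hb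
            exact List.getElem_mem hjb
          have hamem : a ∈ cutList (highPerm σ (firstCut σ) (firstCut_isCut σ)) := by
            obtain ⟨hja, rfl⟩ := List.getElem?_eq_some_iff.mp ha
            exact List.getElem_mem hja
          have hbn : b ≤ m + 1 - firstCut σ := ((mem_cutList _ b).mp hbmem).1
          obtain ⟨hlen, hpt⟩ := IH.2 j' hj' a b ha hb
          have hget : ((⟨firstCut σ, lowPerm σ (firstCut σ) (firstCut_isCut σ)
                (firstCut_le σ (Nat.succ_pos m))⟩ ::
              decomp (m + 1 - firstCut σ) (highPerm σ (firstCut σ) (firstCut_isCut σ))).get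
                ⟨j' + 1, by simpa using hj⟩)
              = ((decomp (m + 1 - firstCut σ)
                  (highPerm σ (firstCut σ) (firstCut_isCut σ))).get ⟨j', hj'⟩) := rfl
          rw [hget]
          refine ⟨by omega, ?_⟩
          intro x hxa hxb
          have hxc : firstCut σ ≤ (x : ℕ) := by omega
          have hx' : (x : ℕ) - firstCut σ < m + 1 - firstCut σ := by omega
          obtain ⟨y, hy1, hy2⟩ := hpt ⟨(x : ℕ) - firstCut σ, hx'⟩ (by simp; omega)
            (by simp; omega)
          refine ⟨y, by simp at hy1; omega, ?_⟩
          rw [highPerm_apply σ (firstCut σ) (firstCut_isCut σ)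
            ⟨(x : ℕ) - firstCut σ, hx'⟩ x (by simp; omega)] at hy2
          have hge := sigma_ge (firstCut_isCut σ) x (by omega)
          omega


noncomputable def eEquiv (n : ℕ) : Equiv.Perm (Fin n) ≃ ConnList n where
  toFun σ := ⟨decomp n σ, ⟨decomp_conn n σ, decomp_sum n σ⟩⟩
  invFun L := glueList n L.1 L.2.2
  left_inv σ := glue_decomp n σ (decomp_sum n σ)
  right_inv L := Subtype.ext (decomp_glue L.1 n L.2.2 L.2.1)

end Stmt4Aux

/-- The map sending a permutation of `[n]` to the list of reduced (unlabeled) forms of its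
restrictions to its components is a bijection between permutations of `[n]` and lists of
connected permutations whose lengths sum to `n`.  The `j`-th entry of the image list has
length `c_{j+1} - c_j` (where `c_0 < c_1 < ⋯` are the cut points delimiting the components)
and acts as `x ↦ σ(x) - c_j` on `x ∈ [c_j, c_{j+1})`, i.e. it is the reduced form of the
restriction of `σ` to its `j`-th component. -/
theorem stmt4 (n : ℕ) :
    ∃ e : Equiv.Perm (Fin n) ≃ ConnList n,
      ∀ σ : Equiv.Perm (Fin n),
        (e σ).1.length + 1 = (cutList σ).length ∧
        ∀ (j : ℕ) (hj : j < (e σ).1.length) (cj cj1 : ℕ),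
          (cutList σ)[j]? = some cj → (cutList σ)[j + 1]? = some cj1 →
            ((e σ).1.get ⟨j, hj⟩).1 = cj1 - cj ∧
            ∀ x : Fin n, cj ≤ (x : ℕ) → (x : ℕ) < cj1 →
              ∃ y : Fin ((e σ).1.get ⟨j, hj⟩).1,
                (y : ℕ) = (x : ℕ) - cj ∧ ((((e σ).1.get ⟨j, hj⟩).2 y : ℕ)) = (σ x : ℕ) - cj := by
  exact ⟨Stmt4Aux.eEquiv n, fun σ => Stmt4Aux.spec n σ⟩
end

section
/- If σ is a stabilized-interval-free permutation of [n-1] (n ≥ 2) and σ' is obtained from σ by inserting n into one of the cycles of σ (i.e., choosing i ∈ [n-1] and setting σ'(i) = n, σ'(n) = σ(i), σ'(j) = σ(j) for j ≠ i, j ≤ n-1), then σ' is a stabilized-interval-free permutation of [n]. -/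
def SIF {n : ℕ} (σ : Equiv.Perm (Fin n)) : Prop :=
  ∀ a b : Fin n, (Finset.Icc a b).Nonempty → Finset.Icc a b ≠ Finset.univ →
    ¬ Stab σ (Finset.Icc a b)

lemma stab_of_maps {n : ℕ} (σ : Equiv.Perm (Fin n)) (S : Finset (Fin n))
    (h : ∀ x ∈ S, σ x ∈ S) : Stab σ S := by
  apply Finset.eq_of_subset_of_card_le
  · intro y hy
    obtain ⟨x, hx, rfl⟩ := Finset.mem_image.mp hy
    exact h x hx
  · rw [Finset.card_image_of_injective _ σ.injective]

/-- If `σ` is a SIF permutation of `[n-1]` (here `[n-1]` is `Fin n` with `n ≥ 1`, so the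
original `n`, namely `n+1`, is at least `2`) and `σ'` is obtained from `σ` by inserting the
largest element `n` into the cycle of `σ` after `i`, then `σ'` is SIF on `[n]`. -/
theorem stmt5 (n : ℕ) (hn : 1 ≤ n) (σ : Equiv.Perm (Fin n)) (hσ : SIF σ) (i : Fin n)
    (σ' : Equiv.Perm (Fin (n + 1)))
    (h1 : σ' (Fin.castSucc i) = Fin.last n)
    (h2 : σ' (Fin.last n) = Fin.castSucc (σ i))
    (h3 : ∀ j : Fin n, j ≠ i → σ' (Fin.castSucc j) = Fin.castSucc (σ j)) :
    SIF σ' := by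
  intro a b hne huniv hstab
  unfold Stab at hstab
  have hmem : ∀ x ∈ Finset.Icc a b, σ' x ∈ Finset.Icc a b := by
    intro x hx
    rw [← hstab]
    exact Finset.mem_image_of_mem _ hx
  have hab : a ≤ b := by
    obtain ⟨x, hx⟩ := hne
    exact le_trans (Finset.mem_Icc.mp hx).1 (Finset.mem_Icc.mp hx).2
  by_cases hb : b = Fin.last n
  · -- case b = last
    subst hb
    have ha0 : a ≠ 0 := by
      rintro rfl
      apply huniv
      ext x
      simp [Fin.zero_le, Fin.le_last]
    have halast : a ≠ Fin.last n := by
      rintro rfl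
      have hm := hmem (Fin.last n) (by simp)
      rw [h2] at hm
      have hm2 := Finset.mem_Icc.mp hm
      exact absurd (le_antisymm hm2.2 hm2.1) (Fin.castSucc_lt_last _).ne
    obtain ⟨a', rfl⟩ := Fin.exists_castSucc_eq.mpr halast
    obtain ⟨m, rfl⟩ : ∃ m, n = m + 1 := ⟨n - 1, (Nat.succ_pred_eq_of_pos hn).symm⟩
    refine hσ a' (Fin.last m) ⟨a', by simp [Fin.le_last]⟩ ?_ ?_
    · intro h
      apply ha0
      have h0 : (0 : Fin (m + 1)) ∈ Finset.Icc a' (Fin.last m) := h ▸ Finset.mem_univ 0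
      have h0' := (Finset.mem_Icc.mp h0).1
      have : a' = 0 := le_antisymm h0' (Fin.zero_le _)
      simp [this]
    · apply stab_of_maps
      intro j hj
      rw [Finset.mem_Icc] at hj ⊢
      refine ⟨?_, Fin.le_last _⟩
      by_cases hji : j = i
      · subst hji
        have hl : Fin.last (m + 1) ∈ Finset.Icc (Fin.castSucc a') (Fin.last (m + 1)) := by
          simp [Fin.le_last]
        have hm' := hmem _ hl
        rw [h2] at hm'
        exact Fin.castSucc_le_castSucc_iff.mp (Finset.mem_Icc.mp hm').1
      · have hjS : Fin.castSucc j ∈ Finset.Icc (Fin.castSucc a') (Fin.last (m + 1)) := by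
          rw [Finset.mem_Icc]
          exact ⟨Fin.castSucc_le_castSucc_iff.mpr hj.1, Fin.le_last _⟩
        have hm' := hmem _ hjS
        rw [h3 j hji] at hm'
        exact Fin.castSucc_le_castSucc_iff.mp (Finset.mem_Icc.mp hm').1
  · -- case b < last
    have hb' : b < Fin.last n := lt_of_le_of_ne (Fin.le_last b) hb
    obtain ⟨b', rfl⟩ := Fin.exists_castSucc_eq.mpr hb
    have ha : a ≠ Fin.last n := fun h => absurd (h ▸ hab) (not_le.mpr hb')
    obtain ⟨a', rfl⟩ := Fin.exists_castSucc_eq.mpr ha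
    have hi : i ∉ Finset.Icc a' b' := by
      intro hiI
      have hiS : Fin.castSucc i ∈ Finset.Icc (Fin.castSucc a') (Fin.castSucc b') := by
        rw [Finset.mem_Icc] at hiI ⊢
        exact ⟨Fin.castSucc_le_castSucc_iff.mpr hiI.1, Fin.castSucc_le_castSucc_iff.mpr hiI.2⟩
      have hm := hmem _ hiS
      rw [h1] at hm
      exact absurd (Finset.mem_Icc.mp hm).2 (not_le.mpr (Fin.castSucc_lt_last b'))
    refine hσ a' b' ⟨a', Finset.mem_Icc.mpr ⟨le_refl _, Fin.castSucc_le_castSucc_iff.mp hab⟩⟩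
      (fun h => hi (h ▸ Finset.mem_univ i)) ?_
    apply stab_of_maps
    intro j hj
    have hji : j ≠ i := fun h => hi (h ▸ hj)
    have hjS : Fin.castSucc j ∈ Finset.Icc (Fin.castSucc a') (Fin.castSucc b') := by
      rw [Finset.mem_Icc] at hj ⊢
      exact ⟨Fin.castSucc_le_castSucc_iff.mpr hj.1, Fin.castSucc_le_castSucc_iff.mpr hj.2⟩
    have hm := hmem _ hjS
    rw [h3 j hji, Finset.mem_Icc] at hm
    rw [Finset.mem_Icc]
    exact ⟨Fin.castSucc_le_castSucc_iff.mp hm.1, Fin.castSucc_le_castSucc_iff.mp hm.2⟩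
end

section
/- Let σ be a stabilized-interval-free permutation of [n] (n ≥ 2), and let σ' ∈ S_{[n-1]} be obtained by deleting n from its cycle (σ'(j) = σ(j) if σ(j) ≠ n, and σ'(σ⁻¹(n)) = σ(n), interpreted on [n-1]). If σ' is not SIF on [n-1], then there is exactly one maximal proper nonempty subinterval of [n-1] stabilized by σ'. -/
/-- `σ'` is obtained from `σ` (a permutation of `[n]`, modeled as `Fin (n+1)`) by deleting the
largest element `n` from its cycle: `σ'(j) = σ(j)` when `σ(j) ≠ n`, and `σ'(σ⁻¹(n)) = σ(n)`. -/
def DeleteTop {n : ℕ} (σ : Equiv.Perm (Fin (n + 1))) (σ' : Equiv.Perm (Fin n)) : Prop :=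
  ∀ j : Fin n, (σ' j : ℕ) =
    if σ (Fin.castSucc j) = Fin.last n then (σ (Fin.last n) : ℕ) else (σ (Fin.castSucc j) : ℕ)

/-- Union of two intervals with a common point is an interval. -/
lemma icc_union_icc {α : Type*} [DecidableEq α] [LinearOrder α] [LocallyFiniteOrder α]
    {a₁ b₁ a₂ b₂ c : α} (h₁ : c ∈ Finset.Icc a₁ b₁) (h₂ : c ∈ Finset.Icc a₂ b₂) :
    Finset.Icc a₁ b₁ ∪ Finset.Icc a₂ b₂ = Finset.Icc (min a₁ a₂) (max b₁ b₂) := by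
  simp only [Finset.mem_Icc] at h₁ h₂
  ext x
  simp only [Finset.mem_union, Finset.mem_Icc, min_le_iff, le_max_iff]
  constructor
  · rintro (⟨h, h'⟩ | ⟨h, h'⟩) <;> tauto
  · rintro ⟨h, h'⟩
    rcases le_or_gt x b₁ with hb | hb
    · rcases le_or_gt a₁ x with ha | ha
      · exact Or.inl ⟨ha, hb⟩
      · exact Or.inr ⟨h.resolve_left (not_le.2 ha),
          le_trans (le_trans ha.le h₁.1) h₂.2⟩
    · exact Or.inr ⟨le_trans (le_trans h₂.1 h₁.2) hb.le,
        h'.resolve_left (not_le.2 hb)⟩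

lemma icc_image_castSucc {n : ℕ} (a b : Fin n) :
    Finset.Icc (Fin.castSucc a) (Fin.castSucc b) = (Finset.Icc a b).image Fin.castSucc := by
  ext x
  simp only [Finset.mem_Icc, Finset.mem_image, Fin.le_def, Fin.coe_castSucc]
  constructor
  · rintro ⟨h1, h2⟩
    have hb := b.isLt
    exact ⟨⟨x.1, by omega⟩, ⟨h1, h2⟩, by apply Fin.ext; simp⟩
  · rintro ⟨y, ⟨h1, h2⟩, rfl⟩
    exact ⟨h1, h2⟩

/-- The key contradiction lemma: if `σ'` stabilizes a proper nonempty interval on which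
`σ ∘ castSucc` never hits the top, then `σ` stabilizes a proper nonempty interval. -/
lemma contra_lemma {n : ℕ} (σ : Equiv.Perm (Fin (n + 1))) (hσ : SIF σ)
    (σ' : Equiv.Perm (Fin n)) (hdel : DeleteTop σ σ') {a b : Fin n}
    (hne : (Finset.Icc a b).Nonempty) (hU : Finset.Icc a b ≠ Finset.univ)
    (hstab : Stab σ' (Finset.Icc a b))
    (h : ∀ j ∈ Finset.Icc a b, σ (Fin.castSucc j) ≠ Fin.last n) : False := by
  have hpt : ∀ j ∈ Finset.Icc a b, σ (Fin.castSucc j) = Fin.castSucc (σ' j) := by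
    intro j hj
    have := hdel j
    rw [if_neg (h j hj)] at this
    exact Fin.ext (by rw [Fin.coe_castSucc]; exact this.symm)
  have hab : a ≤ b := by
    obtain ⟨x, hx⟩ := hne
    simp only [Finset.mem_Icc] at hx
    exact le_trans hx.1 hx.2
  refine hσ (Fin.castSucc a) (Fin.castSucc b) ?_ ?_ ?_
  · exact Finset.nonempty_Icc.2 (Fin.castSucc_le_castSucc_iff.mpr hab)
  · intro hEq
    have hlast : Fin.last n ∈ Finset.Icc (Fin.castSucc a) (Fin.castSucc b) := by
      rw [hEq]; exact Finset.mem_univ _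
    rw [icc_image_castSucc] at hlast
    obtain ⟨y, _, hy⟩ := Finset.mem_image.1 hlast
    exact (Fin.castSucc_lt_last y).ne hy
  · rw [icc_image_castSucc]
    unfold Stab
    rw [Finset.image_image]
    have : (Finset.Icc a b).image (σ ∘ Fin.castSucc)
        = (Finset.Icc a b).image (Fin.castSucc ∘ σ') :=
      Finset.image_congr (fun j hj => hpt j hj)
    rw [this, ← Finset.image_image, hstab]

/-- If `σ` is SIF on `[n]` (with `n ≥ 2`) and deleting `n` from its cycle yields `σ'` on
`[n-1]` which fails to be SIF, then there is exactly one maximal proper nonempty subinterval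
of `[n-1]` stabilized by `σ'`. -/
theorem stmt6 (n : ℕ) (hn : 1 ≤ n) (σ : Equiv.Perm (Fin (n + 1))) (hσ : SIF σ)
    (σ' : Equiv.Perm (Fin n)) (hdel : DeleteTop σ σ') (hnot : ¬ SIF σ') :
    ∃! S : Finset (Fin n),
      (∃ a b : Fin n, S = Finset.Icc a b) ∧ S.Nonempty ∧ S ≠ Finset.univ ∧ Stab σ' S ∧
      ∀ T : Finset (Fin n),
        (∃ a b : Fin n, T = Finset.Icc a b) → T.Nonempty → T ≠ Finset.univ → Stab σ' T →
          S ⊆ T → S = T := by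
  -- extract a witness interval from ¬ SIF σ'
  unfold SIF at hnot
  push_neg at hnot
  obtain ⟨a₀, b₀, hne₀, hU₀, hstab₀⟩ := hnot
  -- σ does not fix the top
  have hlast : σ (Fin.last n) ≠ Fin.last n := by
    intro hfix
    refine contra_lemma σ hσ σ' hdel hne₀ hU₀ hstab₀ (fun j _ hj => ?_)
    have := σ.injective (hj.trans hfix.symm)
    exact (Fin.castSucc_lt_last j).ne this
  have hsymm : σ.symm (Fin.last n) ≠ Fin.last n := fun hfix =>
    hlast ((σ.symm_apply_eq.mp hfix).symm)
  have hjlt : (σ.symm (Fin.last n) : ℕ) < n := by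
    have h1 := (σ.symm (Fin.last n)).isLt
    have h2 : (σ.symm (Fin.last n) : ℕ) ≠ n := fun h => hsymm (Fin.ext h)
    omega
  have hvlt : (σ (Fin.last n) : ℕ) < n := by
    have h1 := (σ (Fin.last n)).isLt
    have h2 : (σ (Fin.last n) : ℕ) ≠ n := fun h => hlast (Fin.ext h)
    omega
  set j₀ : Fin n := ⟨(σ.symm (Fin.last n) : ℕ), hjlt⟩ with hj₀def
  set v : Fin n := ⟨(σ (Fin.last n) : ℕ), hvlt⟩ with hvdef
  have hj₀ : σ (Fin.castSucc j₀) = Fin.last n := by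
    have : Fin.castSucc j₀ = σ.symm (Fin.last n) := Fin.ext (by simp [hj₀def])
    rw [this, Equiv.apply_symm_apply]
  have hσ'j₀ : σ' j₀ = v := by
    have := hdel j₀
    rw [if_pos hj₀] at this
    exact Fin.ext (by simp [this, hvdef])
  -- every stabilized proper interval contains j₀
  have memB : ∀ a b : Fin n, (Finset.Icc a b).Nonempty → Finset.Icc a b ≠ Finset.univ →
      Stab σ' (Finset.Icc a b) → j₀ ∈ Finset.Icc a b := by
    intro a b hne hU hstab
    by_contra hj
    refine contra_lemma σ hσ σ' hdel hne hU hstab (fun j hjmem hj' => ?_)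
    have : Fin.castSucc j = σ.symm (Fin.last n) := by
      rw [← hj']; exact (Equiv.symm_apply_apply σ _).symm
    have hjj : j = j₀ := Fin.ext (by simp [hj₀def, ← this])
    exact hj (hjj ▸ hjmem)
  -- the top element of Fin n
  set top : Fin n := ⟨n - 1, by omega⟩ with htopdef
  have notTop : ∀ a b : Fin n, (Finset.Icc a b).Nonempty → Finset.Icc a b ≠ Finset.univ →
      Stab σ' (Finset.Icc a b) → top ∉ Finset.Icc a b := by
    intro a b hne hU hstab htop
    simp only [Finset.mem_Icc] at htop
    have hbtop : (b : ℕ) = n - 1 := by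
      have h1 := htop.2
      have h2 := b.isLt
      simp only [Fin.le_def, htopdef] at h1
      omega
    have hapos : 0 < (a : ℕ) := by
      by_contra ha
      apply hU
      ext x
      simp only [Finset.mem_Icc, Finset.mem_univ, iff_true]
      have hx := x.isLt
      constructor <;> (rw [Fin.le_def]; omega)
    -- T := Icc (castSucc a) (last n) in Fin (n+1)
    have hTimg : Finset.Icc (Fin.castSucc a) (Fin.last n)
        = (Finset.Icc a b).image Fin.castSucc ∪ {Fin.last n} := by
      ext x
      simp only [Finset.mem_Icc, Finset.mem_union, Finset.mem_image, Finset.mem_singleton,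
        Fin.le_def, Fin.coe_castSucc, Fin.val_last]
      constructor
      · rintro ⟨h1, _⟩
        rcases eq_or_lt_of_le (Nat.lt_succ_iff.1 x.isLt) with hx | hx
        · exact Or.inr (Fin.ext hx)
        · exact Or.inl ⟨⟨x.1, hx⟩, ⟨h1, by omega⟩, Fin.ext rfl⟩
      · rintro (⟨y, ⟨h1, _⟩, rfl⟩ | rfl)
        · exact ⟨h1, Nat.le_of_lt y.isLt⟩
        · exact ⟨Nat.le_of_lt a.isLt, le_refl _⟩
    have hvmem : v ∈ Finset.Icc a b := by
      have := memB a b hne hU hstab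
      rw [← hstab]
      exact Finset.mem_image.2 ⟨j₀, this, hσ'j₀⟩
    have hsub : (Finset.Icc (Fin.castSucc a) (Fin.last n)).image σ
        ⊆ Finset.Icc (Fin.castSucc a) (Fin.last n) := by
      rw [hTimg, Finset.image_union, Finset.image_singleton]
      apply Finset.union_subset
      · rw [Finset.image_image]
        intro x hx
        obtain ⟨j, hjmem, rfl⟩ := Finset.mem_image.1 hx
        by_cases hc : σ (Fin.castSucc j) = Fin.last n
        · simp only [Function.comp_apply, hc]
          exact Finset.mem_union_right _ (Finset.mem_singleton_self _)
        · have := hdel j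
          rw [if_neg hc] at this
          have heq : σ (Fin.castSucc j) = Fin.castSucc (σ' j) :=
            Fin.ext (by rw [Fin.coe_castSucc]; exact this.symm)
          simp only [Function.comp_apply, heq]
          apply Finset.mem_union_left
          refine Finset.mem_image.2 ⟨σ' j, ?_, rfl⟩
          rw [← hstab]
          exact Finset.mem_image.2 ⟨j, hjmem, rfl⟩
      · intro x hx
        rw [Finset.mem_singleton] at hx
        subst hx
        apply Finset.mem_union_left
        have : σ (Fin.last n) = Fin.castSucc v := Fin.ext (by simp [hvdef])
        rw [this]
        exact Finset.mem_image.2 ⟨v, hvmem, rfl⟩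
    have hstabT : Stab σ (Finset.Icc (Fin.castSucc a) (Fin.last n)) := by
      unfold Stab
      refine Finset.eq_of_subset_of_card_le hsub ?_
      rw [Finset.card_image_of_injective _ σ.injective]
    refine hσ (Fin.castSucc a) (Fin.last n) ?_ ?_ hstabT
    · exact Finset.nonempty_Icc.2 (Fin.le_last _)
    · intro hEq
      have h0 : (0 : Fin (n + 1)) ∈ Finset.Icc (Fin.castSucc a) (Fin.last n) := by
        rw [hEq]; exact Finset.mem_univ _
      simp only [Finset.mem_Icc, Fin.le_def, Fin.coe_castSucc, Fin.val_zero] at h0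
      omega
  -- existence of a maximal stabilized interval, by maximal cardinality
  set P : Finset (Fin n) → Prop := fun S =>
    (∃ a b : Fin n, S = Finset.Icc a b) ∧ S.Nonempty ∧ S ≠ Finset.univ ∧ Stab σ' S
    with hPdef
  letI hPdec : DecidablePred P := Classical.decPred P
  set F : Finset (Finset (Fin n)) := Finset.univ.filter P with hFdef
  have hFne : F.Nonempty :=
    ⟨Finset.Icc a₀ b₀, Finset.mem_filter.2 ⟨Finset.mem_univ _, ⟨a₀, b₀, rfl⟩, hne₀, hU₀, hstab₀⟩⟩
  obtain ⟨S, hSF, hSmax⟩ := F.exists_max_image Finset.card hFne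
  have hSP : P S := (Finset.mem_filter.1 hSF).2
  obtain ⟨hSint, hSne, hSU, hSstab⟩ := hSP
  have hSmaximal : ∀ T : Finset (Fin n),
      (∃ a b : Fin n, T = Finset.Icc a b) → T.Nonempty → T ≠ Finset.univ → Stab σ' T →
        S ⊆ T → S = T := by
    intro T hTint hTne hTU hTstab hST
    have hTF : T ∈ F := Finset.mem_filter.2 ⟨Finset.mem_univ _, hTint, hTne, hTU, hTstab⟩
    exact Finset.eq_of_subset_of_card_le hST (hSmax T hTF)
  refine ⟨S, ⟨hSint, hSne, hSU, hSstab, hSmaximal⟩, ?_⟩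
  -- uniqueness
  rintro T ⟨⟨a₁, b₁, hT⟩, hTne, hTU, hTstab, hTmaximal⟩
  obtain ⟨a₂, b₂, hS⟩ := hSint
  subst hT hS
  have hj₀T := memB a₁ b₁ hTne hTU hTstab
  have hj₀S := memB a₂ b₂ hSne hSU hSstab
  have hUnion := icc_union_icc hj₀T hj₀S
  have htopT := notTop a₁ b₁ hTne hTU hTstab
  have htopS := notTop a₂ b₂ hSne hSU hSstab
  set U := Finset.Icc (min a₁ a₂) (max b₁ b₂) with hUdef
  have hUint : ∃ a b : Fin n, U = Finset.Icc a b := ⟨_, _, rfl⟩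
  have hUne : U.Nonempty := by
    rw [← hUnion]
    exact hTne.mono Finset.subset_union_left
  have hUU : U ≠ Finset.univ := by
    intro h
    have : top ∈ U := h ▸ Finset.mem_univ _
    rw [← hUnion, Finset.mem_union] at this
    exact this.elim htopT htopS
  have hUstab : Stab σ' U := by
    unfold Stab
    rw [← hUnion, Finset.image_union, hTstab, hSstab]
  have h1 := hTmaximal U hUint hUne hUU hUstab (hUnion ▸ Finset.subset_union_left)
  have h2 := hSmaximal U hUint hUne hUU hUstab (hUnion ▸ Finset.subset_union_right)
  rw [h1, h2]
end

section
/- Let n ≥ 2 and let σ be a permutation of [n] such that there exists an interior interval I = [k+1, n-j+k-1] of [n-1] (with 1 ≤ k < j ≤ n-2) for which σ stabilizes I ∪ {n}. Suppose the restriction ρ' of σ to I ∪ {n} is SIF (as a permutation of the totally ordered set I ∪ {n}) and the restriction τ of σ to [n-1] \ I is SIF (as a permutation of the totally ordered set [n-1] \ I), and σ⁻¹(n) ∈ I ∪ {n} with σ(n) ∈ I. Then σ is SIF on [n]. -/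
/-- `σ` (stabilizing `T`) is SIF as a permutation of the totally ordered set `T`:
it stabilizes no proper nonempty interval of `T` (a set of consecutive elements of `T`,
i.e. a set of the form `T ∩ [a,b]`). -/
def SIFOn {n : ℕ} (σ : Equiv.Perm (Fin n)) (T : Finset (Fin n)) : Prop :=
  ∀ a b : Fin n, (T ∩ Finset.Icc a b).Nonempty → T ∩ Finset.Icc a b ≠ T →
    ¬ Stab σ (T ∩ Finset.Icc a b)

/-- Elements of `[n]` are modeled as `Fin n`, the element `i+1 ∈ [n]` being `i : Fin n`.
`intervalI n k j` is the interior interval `I = [k+1, n-j+k-1]` of `[n-1]`: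
`i : Fin n` lies in it iff `k+1 ≤ i+1` and `i+1 ≤ n-j+k-1`. -/
def intervalI (n k j : ℕ) : Finset (Fin n) :=
  Finset.univ.filter (fun i => k ≤ (i : ℕ) ∧ (i : ℕ) + j + 2 ≤ n + k)

/-- If `σ` stabilizes `I ∪ {n}` for an interior interval `I = [k+1, n-j+k-1]` of `[n-1]`
(`1 ≤ k < j ≤ n-2`), its restriction `ρ'` to `I ∪ {n}` is SIF, its restriction `τ` to
`[n-1] \ I` is SIF, `σ⁻¹(n) ∈ I ∪ {n}` and `σ(n) ∈ I`, then `σ` is SIF on `[n]`. -/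
theorem stmt7 (n k j : ℕ) (hn : 2 ≤ n) (hk : 1 ≤ k) (hkj : k < j) (hj : j ≤ n - 2)
    (σ : Equiv.Perm (Fin n)) (en : Fin n) (hen : (en : ℕ) + 1 = n)
    (hstab : Stab σ (insert en (intervalI n k j)))
    (hρ : SIFOn σ (insert en (intervalI n k j)))
    (hτ : SIFOn σ (Finset.univ \ insert en (intervalI n k j)))
    (hpre : σ⁻¹ en ∈ insert en (intervalI n k j))
    (himg : σ en ∈ intervalI n k j) :
    SIF σ := by
  intro a b hne hJuniv hstabJ
  set T := insert en (intervalI n k j) with hT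
  set J := Finset.Icc a b with hJ
  -- σ stabilizes the complement of T
  have hstabTc : Stab σ (Finset.univ \ T) := by
    unfold Stab at *
    rw [Finset.image_sdiff _ _ σ.injective, Finset.image_univ_equiv, hstab]
  -- σ stabilizes T ∩ J and Tᶜ ∩ J
  have hT' : Stab σ (T ∩ J) := by
    unfold Stab at *
    rw [Finset.image_inter _ _ σ.injective, hstab, hstabJ]
  have hTc' : Stab σ ((Finset.univ \ T) ∩ J) := by
    unfold Stab at *
    rw [Finset.image_inter _ _ σ.injective, hstabTc, hstabJ]
  have c1 : T ∩ J = ∅ ∨ T ∩ J = T := by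
    by_contra h
    push_neg at h
    exact hρ a b h.1 h.2 hT'
  have c2 : (Finset.univ \ T) ∩ J = ∅ ∨ (Finset.univ \ T) ∩ J = Finset.univ \ T := by
    by_contra h
    push_neg at h
    exact hτ a b h.1 h.2 hTc'
  -- arithmetic facts
  have hjn : j + 2 ≤ n := by omega
  have hkn : k < n := by omega
  -- key elements
  set x0 : Fin n := ⟨k - 1, by omega⟩ with hx0
  set x1 : Fin n := ⟨k, by omega⟩ with hx1
  set x2 : Fin n := ⟨n + k - j - 1, by omega⟩ with hx2
  have hx1T : x1 ∈ T := by
    simp [hT, intervalI, hx1]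
    omega
  have hx0T : x0 ∉ T := by
    simp [hT, intervalI, hx0, Fin.ext_iff]
    omega
  have hx2T : x2 ∉ T := by
    simp [hT, intervalI, hx2, Fin.ext_iff]
    omega
  have henT : en ∈ T := Finset.mem_insert_self _ _
  rcases c1 with c1 | c1 <;> rcases c2 with c2 | c2
  · -- both empty: J empty
    obtain ⟨x, hx⟩ := hne
    by_cases hxT : x ∈ T
    · have : x ∈ T ∩ J := Finset.mem_inter.mpr ⟨hxT, hx⟩
      rw [c1] at this; exact absurd this (Finset.notMem_empty x)
    · have : x ∈ (Finset.univ \ T) ∩ J :=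
        Finset.mem_inter.mpr ⟨Finset.mem_sdiff.mpr ⟨Finset.mem_univ x, hxT⟩, hx⟩
      rw [c2] at this; exact absurd this (Finset.notMem_empty x)
  · -- T ∩ J = ∅, Tᶜ ⊆ J : Tᶜ would be an interval, but x0, x2 ∈ Tᶜ, x1 ∉ Tᶜ
    have hsub : Finset.univ \ T ⊆ J := by
      rw [← c2]; exact Finset.inter_subset_right
    have h0 : x0 ∈ J := hsub (Finset.mem_sdiff.mpr ⟨Finset.mem_univ _, hx0T⟩)
    have h2 : x2 ∈ J := hsub (Finset.mem_sdiff.mpr ⟨Finset.mem_univ _, hx2T⟩)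
    rw [hJ, Finset.mem_Icc] at h0 h2
    have h1 : x1 ∈ J := by
      rw [hJ, Finset.mem_Icc]
      constructor
      · exact le_trans h0.1 (by rw [Fin.le_def]; simp only [hx0, hx1]; omega)
      · exact le_trans (by rw [Fin.le_def]; simp only [hx1, hx2]; omega) h2.2
    have : x1 ∈ T ∩ J := Finset.mem_inter.mpr ⟨hx1T, h1⟩
    rw [c1] at this; exact absurd this (Finset.notMem_empty x1)
  · -- T ⊆ J, Tᶜ ∩ J = ∅ : T would be an interval, but x1, en ∈ T, x2 ∉ T, x1 ≤ x2 ≤ en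
    have hsub : T ⊆ J := by
      rw [← c1]; exact Finset.inter_subset_right
    have h1 : x1 ∈ J := hsub hx1T
    have hn' : en ∈ J := hsub henT
    rw [hJ, Finset.mem_Icc] at h1 hn'
    have h2 : x2 ∈ J := by
      rw [hJ, Finset.mem_Icc]
      constructor
      · exact le_trans h1.1 (by rw [Fin.le_def]; simp only [hx1, hx2]; omega)
      · exact le_trans (by rw [Fin.le_def]; simp only [hx2]; omega) hn'.2
    have : x2 ∈ (Finset.univ \ T) ∩ J :=
      Finset.mem_inter.mpr ⟨Finset.mem_sdiff.mpr ⟨Finset.mem_univ _, hx2T⟩, h2⟩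
    rw [c2] at this; exact absurd this (Finset.notMem_empty x2)
  · -- both full: J = univ
    apply hJuniv
    apply Finset.eq_univ_of_forall
    intro x
    by_cases hxT : x ∈ T
    · have : x ∈ T ∩ J := by rw [c1]; exact hxT
      exact (Finset.mem_inter.mp this).2
    · have hx : x ∈ Finset.univ \ T := Finset.mem_sdiff.mpr ⟨Finset.mem_univ x, hxT⟩
      have : x ∈ (Finset.univ \ T) ∩ J := by rw [c2]; exact hx
      exact (Finset.mem_inter.mp this).2
end

section
/- For every n ≥ 1, the number of n-lists (τ₁,...,τ_n) of stabilized-interval-free permutations (each τ_i a SIF permutation of [m_i] for some m_i ≥ 0, the empty permutation allowed) whose total length Σ m_i equals n-1 is exactly n!. -/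
open Finset

noncomputable section SIFProof

abbrev PPiece : Type := Σ m : ℕ, Equiv.Perm (Fin m)

def ptot {k : ℕ} (b : Fin k → PPiece) : ℕ := ∑ i, (b i).1

def SIFp (p : PPiece) : Prop := SIF p.2

def TL (P : PPiece → Prop) (k m : ℕ) : Type :=
  {b : Fin k → PPiece // (∀ i, P (b i)) ∧ ptot b = m}

lemma ptot_bound {k} (b : Fin k → PPiece) (i : Fin k) : (b i).1 ≤ ptot b :=
  Finset.single_le_sum (f := fun i => (b i).1) (fun _ _ => Nat.zero_le _) (mem_univ i)

instance boundedFinite (m : ℕ) : Finite {p : PPiece // p.1 ≤ m} := by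
  refine Finite.of_injective (β := Σ s : Fin (m+1), Equiv.Perm (Fin s.1))
    (fun p => ⟨⟨p.1.1, Nat.lt_succ_of_le p.2⟩, p.1.2⟩) ?_
  rintro ⟨⟨a, pa⟩, ha⟩ ⟨⟨b, pb⟩, hb⟩ h
  injection h with h1 h2
  obtain rfl : a = b := by simpa using congrArg Fin.val h1
  have h3 : pa = pb := eq_of_heq h2
  subst h3
  rfl

instance TLfinite (P : PPiece → Prop) (k m : ℕ) : Finite (TL P k m) := by
  refine Finite.of_injective (β := Fin k → {p : PPiece // p.1 ≤ m})
    (fun b i => ⟨b.1 i, le_trans (ptot_bound b.1 i) (le_of_eq b.2.2)⟩) ?_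
  intro b b' h
  apply Subtype.ext; funext i
  exact congrArg Subtype.val (congrFun h i)

lemma ncard_sigma {α : Type*} (β : α → Type*) [Fintype α] [∀ a, Finite (β a)] :
    Nat.card (Σ a, β a) = ∑ a, Nat.card (β a) := by
  classical
  letI : ∀ a, Fintype (β a) := fun a => Fintype.ofFinite _
  simp [Nat.card_eq_fintype_card, Fintype.card_sigma]

def pc (P : PPiece → Prop) (j : ℕ) : ℕ := Nat.card {σ : Equiv.Perm (Fin j) // P ⟨j, σ⟩}

def gc (P : PPiece → Prop) (k m : ℕ) : ℕ := Nat.card (TL P k m)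

lemma gc_zero (P : PPiece → Prop) (m : ℕ) : gc P 0 m = if m = 0 then 1 else 0 := by
  unfold gc
  split_ifs with h
  · subst h
    rw [Nat.card_eq_one_iff_unique]
    constructor
    · constructor
      rintro ⟨b, hb⟩ ⟨b', hb'⟩
      apply Subtype.ext; funext i; exact i.elim0
    · exact ⟨⟨fun i => i.elim0, fun i => i.elim0, by simp [ptot]⟩⟩
  · have : IsEmpty (TL P 0 m) := ⟨fun b => h (by simpa [ptot] using b.2.2.symm)⟩
    exact Nat.card_of_isEmpty

def consEquiv (P : PPiece → Prop) (k m : ℕ) :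
    TL P (k+1) m ≃ Σ x : {x : ℕ × ℕ // x ∈ Finset.HasAntidiagonal.antidiagonal m},
      {σ : Equiv.Perm (Fin x.1.1) // P ⟨x.1.1, σ⟩} × TL P k x.1.2 where
  toFun := fun ⟨bf, hP, hsum⟩ =>
    ⟨⟨((bf 0).1, ptot (fun i => bf i.succ)), Finset.HasAntidiagonal.mem_antidiagonal.mpr
        (by rw [← hsum]; exact (Fin.sum_univ_succ fun i => (bf i).1).symm)⟩,
      ⟨(bf 0).2, hP 0⟩, ⟨fun i => bf i.succ, fun i => hP i.succ, rfl⟩⟩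
  invFun := fun ⟨⟨⟨s, t⟩, hx⟩, ⟨σ, hσ⟩, ⟨f, hf1, hf2⟩⟩ =>
    ⟨Fin.cons ⟨s, σ⟩ f, fun i => Fin.cases hσ hf1 i, by
      have hx' := Finset.HasAntidiagonal.mem_antidiagonal.mp hx
      rw [ptot, Fin.sum_univ_succ]
      simp only [Fin.cons_zero, Fin.cons_succ]
      rw [show ∑ i : Fin k, (f i).1 = ptot f from rfl, hf2]
      exact hx'⟩
  left_inv := fun ⟨bf, hP, hsum⟩ => Subtype.ext (Fin.cons_self_tail bf)
  right_inv := fun ⟨⟨⟨s, t⟩, hx⟩, ⟨σ, hσ⟩, ⟨f, hf1, hf2⟩⟩ => by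
    dsimp only at hf2
    subst hf2
    rfl

lemma gc_succ (P : PPiece → Prop) (k m : ℕ) :
    gc P (k+1) m = ∑ x ∈ Finset.HasAntidiagonal.antidiagonal m, pc P x.1 * gc P k x.2 := by
  rw [gc, Nat.card_congr (consEquiv P k m), ncard_sigma,
    ← Finset.sum_coe_sort (Finset.HasAntidiagonal.antidiagonal m)]
  exact Fintype.sum_congr _ _ fun x => Nat.card_prod _ _



-- ===== power series layer =====
def aS (j : ℕ) : ℕ := Nat.card {σ : Equiv.Perm (Fin j) // SIF σ}

def Fps : PowerSeries ℕ := PowerSeries.mk fun s => s.factorial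

def TrueP : PPiece → Prop := fun _ => True

lemma pc_true (j : ℕ) : pc TrueP j = j.factorial := by
  have e : {σ : Equiv.Perm (Fin j) // TrueP ⟨j, σ⟩} ≃ Equiv.Perm (Fin j) :=
    Equiv.subtypeUnivEquiv fun _ => trivial
  rw [pc, Nat.card_congr e, Nat.card_eq_fintype_card, Fintype.card_perm, Fintype.card_fin]

lemma pc_sif (j : ℕ) : pc SIFp j = aS j := rfl

open PowerSeries in
lemma coeff_F_pow (k n : ℕ) : PowerSeries.coeff n (Fps ^ k) = gc TrueP k n := by
  induction k generalizing n with
  | zero => simp [PowerSeries.coeff_one, gc_zero]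
  | succ k ih =>
    rw [pow_succ', PowerSeries.coeff_mul, gc_succ]
    refine Finset.sum_congr rfl fun x hx => ?_
    rw [ih, pc_true]
    simp [Fps, PowerSeries.coeff_mk]


section PartAProof

variable {m : ℕ}

/-- apply a permutation of `Fin m` to a natural number, acting as identity off `[0,m)`. -/
def ap (σ : Equiv.Perm (Fin m)) (x : ℕ) : ℕ := if h : x < m then (σ ⟨x, h⟩).val else x

lemma ap_lt (σ : Equiv.Perm (Fin m)) {x : ℕ} (h : x < m) : ap σ x < m := by
  rw [ap, dif_pos h]; exact (σ ⟨x, h⟩).2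

lemma ap_big (σ : Equiv.Perm (Fin m)) {x : ℕ} (h : ¬ x < m) : ap σ x = x := dif_neg h

lemma ap_inv (σ : Equiv.Perm (Fin m)) (x : ℕ) : ap σ⁻¹ (ap σ x) = x := by
  by_cases h : x < m
  · have h1 : ap σ x = (σ ⟨x, h⟩).val := dif_pos h
    rw [h1, ap, dif_pos (σ ⟨x, h⟩).2]
    have h2 : (⟨(σ ⟨x, h⟩).val, (σ ⟨x, h⟩).2⟩ : Fin m) = σ ⟨x, h⟩ := rfl
    rw [h2]; simp
  · rw [ap_big σ h, ap_big σ⁻¹ h]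

lemma ap_inj (σ : Equiv.Perm (Fin m)) : Function.Injective (ap σ) := by
  intro x y h
  have := ap_inv σ x
  rw [h, ap_inv σ y] at this
  exact this.symm

lemma ap_fin (σ : Equiv.Perm (Fin m)) (x : Fin m) : ap σ x.val = (σ x).val := by
  rw [ap, dif_pos x.2]

/-- the interval `[l, r)` is stabilized -/
def StabN (σ : Equiv.Perm (Fin m)) (l r : ℕ) : Prop :=
  ∀ x, l ≤ x → x < r → l ≤ ap σ x ∧ ap σ x < r

lemma stabN_inv (σ : Equiv.Perm (Fin m)) {l r : ℕ} (hs : StabN σ l r) : StabN σ⁻¹ l r := by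
  intro y hy1 hy2
  by_cases hym : y < m
  · classical
    set F := (Finset.range m).filter (fun z => l ≤ z ∧ z < r) with hF
    have hmapsub : F.image (ap σ) ⊆ F := by
      intro w hw
      obtain ⟨z, hz, hzw⟩ := Finset.mem_image.mp hw
      obtain ⟨hzm, hz1, hz2⟩ : z < m ∧ l ≤ z ∧ z < r := by
        have := Finset.mem_filter.mp hz
        exact ⟨Finset.mem_range.mp this.1, this.2⟩
      have := hs z hz1 hz2
      subst hzw
      exact Finset.mem_filter.mpr ⟨Finset.mem_range.mpr (ap_lt σ hzm), this⟩
    have himg : F.image (ap σ) = F :=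
      Finset.eq_of_subset_of_card_le hmapsub
        (le_of_eq (Finset.card_image_of_injective _ (ap_inj σ)).symm)
    have hyF : y ∈ F :=
      Finset.mem_filter.mpr ⟨Finset.mem_range.mpr hym, hy1, hy2⟩
    rw [← himg] at hyF
    obtain ⟨z, hzF, hzy⟩ := Finset.mem_image.mp hyF
    have hz : ap σ⁻¹ y = z := by rw [← hzy, ap_inv]
    rw [hz]
    exact ⟨(Finset.mem_filter.mp hzF).2.1, (Finset.mem_filter.mp hzF).2.2⟩
  · rw [ap_big σ⁻¹ hym]; exact ⟨hy1, hy2⟩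

lemma stabN_compl (σ : Equiv.Perm (Fin m)) {R : ℕ} (h : StabN σ 0 R) : StabN σ R m := by
  intro x hx1 hx2
  refine ⟨?_, ap_lt σ hx2⟩
  by_contra hlt
  push_neg at hlt
  have h2 := stabN_inv σ h (ap σ x) (Nat.zero_le _) hlt
  rw [ap_inv] at h2
  omega

/-- x lies in some stabilized interval avoiding 0 -/
def InBV (σ : Equiv.Perm (Fin m)) (x : ℕ) : Prop :=
  ∃ l r, 1 ≤ l ∧ l ≤ x ∧ x < r ∧ r ≤ m ∧ StabN σ l r

lemma inBV_lt {σ : Equiv.Perm (Fin m)} {x : ℕ} (h : InBV σ x) : x < m := by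
  obtain ⟨l, r, _, _, _, _, _⟩ := h; omega

lemma inBV_ap {σ : Equiv.Perm (Fin m)} {x : ℕ} : InBV σ x ↔ InBV σ (ap σ x) := by
  constructor
  · rintro ⟨l, r, h1, h2, h3, h4, h5⟩
    exact ⟨l, r, h1, (h5 x h2 h3).1, (h5 x h2 h3).2, h4, h5⟩
  · rintro ⟨l, r, h1, h2, h3, h4, h5⟩
    have h6 := stabN_inv σ h5 (ap σ x) h2 h3
    rw [ap_inv] at h6
    exact ⟨l, r, h1, h6.1, h6.2, h4, h5⟩


section Builder

variable (j : ℕ) (b : Fin j → PPiece)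

def szB (i : ℕ) : ℕ := if h : i < j then (b ⟨i, h⟩).1 else 0

def ccB (i : ℕ) : ℕ := i + ∑ t ∈ Finset.range i, szB j b t

lemma ccB_succ (i : ℕ) : ccB j b (i+1) = ccB j b i + 1 + szB j b i := by
  rw [ccB, ccB, Finset.sum_range_succ]; omega

lemma ccB_zero : ccB j b 0 = 0 := by simp [ccB]

lemma ccB_mono : StrictMono (ccB j b) :=
  strictMono_nat_of_lt_succ (fun i => by rw [ccB_succ]; omega)

lemma ccB_self : ccB j b j = j + ptot b := by
  rw [ccB]
  have h : ∑ t ∈ Finset.range j, szB j b t = ptot b := by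
    rw [← Fin.sum_univ_eq_sum_range (szB j b) j]
    exact Fintype.sum_congr _ _ fun i => by rw [szB, dif_pos i.2]
  omega

lemma ccB_top (hs : j + ptot b = m) : ccB j b j = m := by
  rw [ccB_self, hs]

lemma jpos {m : ℕ} (hs : j + ptot b = m) (hm : 0 < m) : 0 < j := by
  by_contra h
  push_neg at h
  have hj0 : j = 0 := by omega
  subst hj0
  have h0 : ptot b = 0 := by
    rw [ptot]
    simp
  omega

def idxB (x : ℕ) : ℕ :=
  @Nat.findGreatest (fun i => ccB j b i ≤ x) (fun i => Nat.decLe _ _) (j - 1)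

lemma idxB_lt (hj : 0 < j) (x : ℕ) : idxB j b x < j :=
  lt_of_le_of_lt (Nat.findGreatest_le _) (by omega)

lemma idxB_le (x : ℕ) : ccB j b (idxB j b x) ≤ x := by
  refine @Nat.findGreatest_spec 0 (fun i => ccB j b i ≤ x) (fun i => Nat.decLe _ _)
    (j-1) (Nat.zero_le _) ?_
  show ccB j b 0 ≤ x
  rw [ccB_zero]
  omega

lemma idxB_lt_next {m : ℕ} (hs : j + ptot b = m) (x : ℕ) (hx : x < m) :
    x < ccB j b (idxB j b x + 1) := by
  rcases Nat.lt_or_ge (idxB j b x) (j-1) with h | h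
  · by_contra hcon
    push_neg at hcon
    exact absurd hcon
      (@Nat.findGreatest_is_greatest (idxB j b x + 1) (fun i => ccB j b i ≤ x)
        (fun i => Nat.decLe _ _) (j-1) (Nat.lt_succ_self _) (by omega))
  · have h2 : j ≤ idxB j b x + 1 := by omega
    have h3 : ccB j b j ≤ ccB j b (idxB j b x + 1) := (ccB_mono j b).monotone h2
    rw [ccB_top j b hs] at h3
    omega

lemma idxB_unique {m : ℕ} (hs : j + ptot b = m) {i x : ℕ} (hi : i < j)
    (h1 : ccB j b i ≤ x) (h2 : x < ccB j b (i+1)) : idxB j b x = i := by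
  have hx : x < m := by
    have h3 : ccB j b (i+1) ≤ ccB j b j := (ccB_mono j b).monotone (by omega)
    rw [ccB_top j b hs] at h3
    omega
  have l1 := idxB_le j b x
  have l2 := idxB_lt_next j b hs x hx
  rcases lt_trichotomy (idxB j b x) i with h | h | h
  · have : ccB j b (idxB j b x + 1) ≤ ccB j b i := (ccB_mono j b).monotone (by omega)
    omega
  · exact h
  · have : ccB j b (i + 1) ≤ ccB j b (idxB j b x) := (ccB_mono j b).monotone (by omega)
    omega

def fB (τ : Equiv.Perm (Fin j)) (x : ℕ) : ℕ :=
  if hi : idxB j b x < j then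
    if x = ccB j b (idxB j b x) then ccB j b (τ ⟨idxB j b x, hi⟩).val
    else ccB j b (idxB j b x) + 1 + ap (b ⟨idxB j b x, hi⟩).2 (x - (ccB j b (idxB j b x) + 1))
  else x

lemma fB_spec (τ : Equiv.Perm (Fin j)) {x i : ℕ} (hi : i < j) (hidx : idxB j b x = i) :
    fB j b τ x = if x = ccB j b i then ccB j b (τ ⟨i, hi⟩).val
      else ccB j b i + 1 + ap (b ⟨i, hi⟩).2 (x - (ccB j b i + 1)) := by
  subst hidx
  rw [fB, dif_pos hi]

lemma fB_c {m : ℕ} (τ : Equiv.Perm (Fin j)) (hs : j + ptot b = m) (i : Fin j) :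
    fB j b τ (ccB j b i.val) = ccB j b (τ i).val := by
  have hidx : idxB j b (ccB j b i.val) = i.val :=
    idxB_unique j b hs i.2 (le_refl _) (by rw [ccB_succ]; omega)
  rw [fB_spec j b τ i.2 hidx, if_pos rfl]

lemma fB_b {m : ℕ} (τ : Equiv.Perm (Fin j)) (hs : j + ptot b = m) (i : Fin j) {o : ℕ}
    (ho : o < (b i).1) :
    fB j b τ (ccB j b i.val + 1 + o) = ccB j b i.val + 1 + ap (b i).2 o := by
  have hsz : szB j b i.val = (b i).1 := by rw [szB, dif_pos i.2]
  have hx2 : ccB j b i.val + 1 + o < ccB j b (i.val+1) := by rw [ccB_succ]; omega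
  have hidx : idxB j b (ccB j b i.val + 1 + o) = i.val :=
    idxB_unique j b hs i.2 (by omega) hx2
  rw [fB_spec j b τ i.2 hidx, if_neg (by omega)]
  show ccB j b i.val + 1 + ap (b i).2 (ccB j b i.val + 1 + o - (ccB j b i.val + 1))
      = ccB j b i.val + 1 + ap (b i).2 o
  congr 2
  omega

lemma ccB_lt_m {m : ℕ} (hs : j + ptot b = m) {i : ℕ} (hi : i < j) : ccB j b i < m := by
  have h := (ccB_mono j b).monotone (show i + 1 ≤ j by omega)
  have h2 := ccB_succ j b i
  rw [ccB_top j b hs] at h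
  omega

lemma fB_lt {m : ℕ} (τ : Equiv.Perm (Fin j)) (hs : j + ptot b = m) {x : ℕ}
    (hx : x < m) : fB j b τ x < m := by
  have hj : 0 < j := jpos j b hs (by omega)
  have hi : idxB j b x < j := idxB_lt j b hj x
  have h1 := idxB_le j b x
  have h2 := idxB_lt_next j b hs x hx
  rw [fB_spec j b τ hi rfl]
  split_ifs with he
  · exact ccB_lt_m j b hs (τ ⟨idxB j b x, hi⟩).2
  · have hsz : szB j b (idxB j b x) = (b ⟨idxB j b x, hi⟩).1 := dif_pos hi
    have ho : x - (ccB j b (idxB j b x) + 1) < (b ⟨idxB j b x, hi⟩).1 := by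
      rw [ccB_succ] at h2
      omega
    have h3 := ap_lt (b ⟨idxB j b x, hi⟩).2 ho
    have h4 := ccB_succ j b (idxB j b x)
    have h5 : ccB j b (idxB j b x + 1) ≤ ccB j b j := (ccB_mono j b).monotone (by omega)
    rw [ccB_top j b hs] at h5
    omega

/-- classification of the action of fB -/
lemma fB_pos {m : ℕ} (τ : Equiv.Perm (Fin j)) (hs : j + ptot b = m) {x : ℕ}
    (hx : x < m) :
    (∃ i : Fin j, x = ccB j b i.val ∧ fB j b τ x = ccB j b (τ i).val) ∨
    (∃ i : Fin j, ∃ o, o < (b i).1 ∧ x = ccB j b i.val + 1 + o ∧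
      fB j b τ x = ccB j b i.val + 1 + ap (b i).2 o) := by
  have hj : 0 < j := jpos j b hs (by omega)
  have hi : idxB j b x < j := idxB_lt j b hj x
  have h1 := idxB_le j b x
  have h2 := idxB_lt_next j b hs x hx
  by_cases he : x = ccB j b (idxB j b x)
  · left
    refine ⟨⟨idxB j b x, hi⟩, he, ?_⟩
    rw [fB_spec j b τ hi rfl, if_pos he]
  · right
    have hsz : szB j b (idxB j b x) = (b ⟨idxB j b x, hi⟩).1 := dif_pos hi
    have ho : x - (ccB j b (idxB j b x) + 1) < (b ⟨idxB j b x, hi⟩).1 := by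
      rw [ccB_succ] at h2
      omega
    refine ⟨⟨idxB j b x, hi⟩, x - (ccB j b (idxB j b x) + 1), ho, ?_, ?_⟩
    · show x = ccB j b (idxB j b x) + 1 + (x - (ccB j b (idxB j b x) + 1))
      omega
    · rw [fB_spec j b τ hi rfl, if_neg he]

lemma ccB_not_between {i i' o : ℕ} (hi' : i' < j) (ho : o < szB j b i') :
    ccB j b i ≠ ccB j b i' + 1 + o := by
  intro hcon
  have h1 := ccB_succ j b i'
  rcases le_or_gt i i' with h | h
  · have := (ccB_mono j b).monotone h
    omega
  · have := (ccB_mono j b).monotone (show i' + 1 ≤ i by omega)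
    omega

lemma fB_inj {m : ℕ} (τ : Equiv.Perm (Fin j)) (hs : j + ptot b = m) {x y : ℕ}
    (hx : x < m) (hy : y < m) (hxy : fB j b τ x = fB j b τ y) : x = y := by
  have hccinj : Function.Injective (ccB j b) := (ccB_mono j b).injective
  rcases fB_pos j b τ hs hx with ⟨i, hi1, hi2⟩ | ⟨i, o, ho, hi1, hi2⟩ <;>
    rcases fB_pos j b τ hs hy with ⟨i', hi1', hi2'⟩ | ⟨i', o', ho', hi1', hi2'⟩
  · rw [hi2, hi2'] at hxy
    have h1 : τ i = τ i' := Fin.ext (hccinj hxy)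
    rw [hi1, hi1', τ.injective h1]
  · exfalso
    rw [hi2, hi2'] at hxy
    have hsz : szB j b i'.val = (b i').1 := dif_pos i'.2
    exact ccB_not_between j b i'.2 (by rw [hsz]; exact ap_lt (b i').2 ho')
      hxy
  · exfalso
    rw [hi2, hi2'] at hxy
    have hsz : szB j b i.val = (b i).1 := dif_pos i.2
    exact ccB_not_between j b i.2 (by rw [hsz]; exact ap_lt (b i).2 ho) hxy.symm
  · rw [hi2, hi2'] at hxy
    have hii : i = i' := by
      by_contra hne
      have hv := ap_lt (b i).2 ho
      have hv' := ap_lt (b i').2 ho'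
      have hsz : szB j b i.val = (b i).1 := dif_pos i.2
      have hsz' : szB j b i'.val = (b i').1 := dif_pos i'.2
      rcases Nat.lt_or_ge i.val i'.val with h | h
      · have h1 := (ccB_mono j b).monotone (show i.val + 1 ≤ i'.val by omega)
        have h2 := ccB_succ j b i.val
        omega
      · have hne' : i'.val < i.val := by
          rcases Nat.lt_or_ge i'.val i.val with hh | hh
          · exact hh
          · exact absurd (Fin.ext (by omega : i.val = i'.val)) hne
        have h1 := (ccB_mono j b).monotone (show i'.val + 1 ≤ i.val by omega)
        have h2 := ccB_succ j b i'.val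
        omega
    subst hii
    have h3 : ap (b i).2 o = ap (b i).2 o' := by omega
    have h4 : o = o' := ap_inj (b i).2 h3
    rw [hi1, hi1', h4]

def buildPerm {m : ℕ} (τ : Equiv.Perm (Fin j)) (hs : j + ptot b = m) : Equiv.Perm (Fin m) :=
  Equiv.ofBijective (fun x : Fin m => ⟨fB j b τ x.val, fB_lt j b τ hs x.2⟩)
    (Finite.injective_iff_bijective.mp
      (fun x y hxy => Fin.ext (fB_inj j b τ hs x.2 y.2 (congrArg Fin.val hxy))))

lemma ap_build {m : ℕ} (τ : Equiv.Perm (Fin j)) (hs : j + ptot b = m) {x : ℕ} (hx : x < m) :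
    ap (buildPerm j b τ hs) x = fB j b τ x := by
  rw [ap, dif_pos hx]
  rfl


end Builder

def CsetF (σ : Equiv.Perm (Fin m)) : Finset ℕ :=
  @Finset.filter _ (fun x => ¬ InBV σ x) (Classical.decPred _) (Finset.range m)

lemma mem_CsetF {σ : Equiv.Perm (Fin m)} {x : ℕ} :
    x ∈ CsetF σ ↔ x < m ∧ ¬ InBV σ x := by
  rw [CsetF, @Finset.mem_filter _ _ (Classical.decPred _), Finset.mem_range]

section Builder2

variable (j : ℕ) (b : Fin j → PPiece) {m : ℕ} (τ : Equiv.Perm (Fin j)) (hs : j + ptot b = m)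

lemma build_gap_stab (i : Fin j) :
    StabN (buildPerm j b τ hs) (ccB j b i.val + 1) (ccB j b (i.val+1)) := by
  intro x hx1 hx2
  have hsz : szB j b i.val = (b i).1 := dif_pos i.2
  have hcs := ccB_succ j b i.val
  have hoo : x - (ccB j b i.val + 1) < (b i).1 := by omega
  have hxo : x = ccB j b i.val + 1 + (x - (ccB j b i.val + 1)) := by omega
  have h5 : ccB j b (i.val+1) ≤ m := by
    have := (ccB_mono j b).monotone (show i.val + 1 ≤ j by omega)
    rw [ccB_top j b hs] at this
    exact this
  have hxm : x < m := by omega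
  rw [ap_build j b τ hs hxm]
  rw [hxo, fB_b j b τ hs i hoo]
  have := ap_lt (b i).2 hoo
  omega

lemma build_CsetF (hτ : SIF τ) (hm : 0 < m) :
    CsetF (buildPerm j b τ hs) = Finset.image (fun i : Fin j => ccB j b i.val) Finset.univ := by
  have hj : 0 < j := jpos j b hs hm
  apply Finset.Subset.antisymm
  · intro x hx
    obtain ⟨hxm, hxB⟩ := mem_CsetF.mp hx
    have hi : idxB j b x < j := idxB_lt j b hj x
    have h1 := idxB_le j b x
    have h2 := idxB_lt_next j b hs x hxm
    by_cases he : x = ccB j b (idxB j b x)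
    · exact Finset.mem_image.mpr ⟨⟨idxB j b x, hi⟩, Finset.mem_univ _, he.symm⟩
    · exfalso
      apply hxB
      have h5 : ccB j b (idxB j b x + 1) ≤ m := by
        have := (ccB_mono j b).monotone (show idxB j b x + 1 ≤ j by omega)
        rw [ccB_top j b hs] at this
        exact this
      exact ⟨ccB j b (idxB j b x) + 1, ccB j b (idxB j b x + 1), by omega, by omega, h2, h5,
        build_gap_stab j b τ hs ⟨idxB j b x, hi⟩⟩
  · intro x hx
    obtain ⟨i, _, rfl⟩ := Finset.mem_image.mp hx
    refine mem_CsetF.mpr ⟨ccB_lt_m j b hs i.2, ?_⟩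
    rintro ⟨l, r, hl1, hl2, hl3, hl4, hstab⟩
    classical
    set T := Finset.univ.filter (fun t : Fin j => l ≤ ccB j b t.val ∧ ccB j b t.val < r) with hT
    have hiT : i ∈ T := Finset.mem_filter.mpr ⟨Finset.mem_univ _, hl2, hl3⟩
    have hTne : T.Nonempty := ⟨i, hiT⟩
    set A := T.min' hTne with hA'
    set B := T.max' hTne with hB'
    have hA : A ∈ T := Finset.min'_mem _ _
    have hB : B ∈ T := Finset.max'_mem _ _
    have hIcc : Finset.Icc A B = T := by
      apply Finset.Subset.antisymm
      · intro t ht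
        obtain ⟨h5, h6⟩ := Finset.mem_Icc.mp ht
        refine Finset.mem_filter.mpr ⟨Finset.mem_univ _, ?_, ?_⟩
        · exact le_trans (Finset.mem_filter.mp hA).2.1 ((ccB_mono j b).monotone h5)
        · exact lt_of_le_of_lt ((ccB_mono j b).monotone h6) (Finset.mem_filter.mp hB).2.2
      · intro t ht
        exact Finset.mem_Icc.mpr ⟨Finset.min'_le _ _ ht, Finset.le_max' _ _ ht⟩
    have hmapsto : ∀ t ∈ T, τ t ∈ T := by
      intro t ht
      obtain ⟨_, ht1, ht2⟩ := Finset.mem_filter.mp ht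
      have hcm : ccB j b t.val < m := ccB_lt_m j b hs t.2
      have hv := hstab (ccB j b t.val) ht1 ht2
      rw [ap_build j b τ hs hcm, fB_c j b τ hs t] at hv
      exact Finset.mem_filter.mpr ⟨Finset.mem_univ _, hv.1, hv.2⟩
    have hstabτ : Stab τ (Finset.Icc A B) := by
      rw [Stab]
      apply Finset.eq_of_subset_of_card_le
      · intro y hy
        obtain ⟨t, ht, rfl⟩ := Finset.mem_image.mp hy
        rw [hIcc] at ht ⊢
        exact hmapsto t ht
      · rw [Finset.card_image_of_injective _ τ.injective]
    have hne0 : (⟨0, hj⟩ : Fin j) ∉ Finset.Icc A B := by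
      rw [hIcc]
      intro hmem
      have h6 := (Finset.mem_filter.mp hmem).2.1
      rw [show (⟨0, hj⟩ : Fin j).val = 0 from rfl, ccB_zero] at h6
      omega
    exact hτ A B ⟨i, hIcc ▸ hiT⟩
      (fun hu => hne0 (hu ▸ Finset.mem_univ _)) hstabτ

end Builder2

section Extract

variable (σ : Equiv.Perm (Fin m))

def jE : ℕ := (CsetF σ).card

def cE (i : Fin (jE σ)) : ℕ := (CsetF σ).orderEmbOfFin rfl i

lemma cE_mem (i : Fin (jE σ)) : cE σ i ∈ CsetF σ := Finset.orderEmbOfFin_mem _ rfl i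

lemma cE_mono : StrictMono (cE σ) := ((CsetF σ).orderEmbOfFin rfl).strictMono

lemma cE_lt (i : Fin (jE σ)) : cE σ i < m := (mem_CsetF.mp (cE_mem σ i)).1

lemma cE_surj {y : ℕ} (hy : y ∈ CsetF σ) : ∃ i, cE σ i = y := by
  have := Finset.range_orderEmbOfFin (CsetF σ) (rfl : (CsetF σ).card = jE σ)
  have hy' : y ∈ Set.range ((CsetF σ).orderEmbOfFin rfl) := by rw [this]; exact hy
  obtain ⟨i, hi⟩ := hy'
  exact ⟨i, hi⟩

lemma zero_mem_CsetF (hm : 0 < m) : 0 ∈ CsetF σ := by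
  refine mem_CsetF.mpr ⟨hm, ?_⟩
  rintro ⟨l, r, h1, h2, _, _, _⟩
  omega

lemma jE_pos (hm : 0 < m) : 0 < jE σ :=
  Finset.card_pos.mpr ⟨0, zero_mem_CsetF σ hm⟩

lemma cE_zero (hm : 0 < m) {h0 : 0 < jE σ} : cE σ ⟨0, h0⟩ = 0 := by
  have h1 : cE σ ⟨0, h0⟩ ≤ 0 := by
    have h2 := Finset.orderEmbOfFin_zero (rfl : (CsetF σ).card = jE σ) h0
    have h3 : cE σ ⟨0, h0⟩ = (CsetF σ).min' (Finset.card_pos.mp h0) := h2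
    rw [h3]
    exact Finset.min'_le _ _ (zero_mem_CsetF σ hm)
  omega

lemma cE_pos (hm : 0 < m) {i : Fin (jE σ)} (hi : 0 < i.val) : 0 < cE σ i := by
  have h0 : 0 < jE σ := jE_pos σ hm
  have := cE_mono σ (show (⟨0, h0⟩ : Fin (jE σ)) < i from hi)
  rw [cE_zero σ hm] at this
  exact this

/-- extended position function -/
def extE (i : ℕ) : ℕ := if h : i < jE σ then cE σ ⟨i, h⟩ else m

lemma extE_le (i : ℕ) : extE σ i ≤ m := by
  rw [extE]
  split_ifs with h
  · exact le_of_lt (cE_lt σ _)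
  · exact le_refl m

lemma extE_top (i : ℕ) (h : jE σ ≤ i) : extE σ i = m := dif_neg (by omega)

/-- no element of `CsetF` lies strictly between `extE i` and `extE (i+1)` -/
lemma extE_consec {x : ℕ} (hx : x ∈ CsetF σ) {i : ℕ} (hi : i < jE σ)
    (hgt : extE σ i < x) : extE σ (i+1) ≤ x := by
  obtain ⟨t, rfl⟩ := cE_surj σ hx
  rw [extE, dif_pos hi] at hgt
  have hit : (⟨i, hi⟩ : Fin (jE σ)) < t := (cE_mono σ).lt_iff_lt.mp hgt
  rw [extE]
  split_ifs with h
  · exact (cE_mono σ).le_iff_le.mpr (show (⟨i+1, h⟩ : Fin (jE σ)) ≤ t from hit)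
  · exfalso
    have h7 : t.val < jE σ := t.2
    have h8 : i < t.val := hit
    omega

lemma extE_succ_gt (i : ℕ) (hi : i < jE σ) : extE σ i < extE σ (i+1) := by
  rw [extE, dif_pos hi, extE]
  split_ifs with h
  · exact cE_mono σ (show (⟨i, hi⟩ : Fin (jE σ)) < ⟨i+1, h⟩ from Nat.lt_succ_self i)
  · exact cE_lt σ _

lemma extE_mono : Monotone (extE σ) := by
  refine monotone_nat_of_le_succ fun i => ?_
  rcases Nat.lt_or_ge i (jE σ) with h | h
  · exact le_of_lt (extE_succ_gt σ i h)
  · rw [extE_top σ i h, extE_top σ (i+1) (by omega)]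

/-- the gap after `extE i` is stabilized -/
lemma gap_stab (i : ℕ) (hi : i < jE σ) : StabN σ (extE σ i + 1) (extE σ (i+1)) := by
  have hnext_le := extE_le σ (i+1)
  have hInGap : ∀ y, extE σ i < y → y < extE σ (i+1) → InBV σ y := by
    intro y hy1 hy2
    have hym : y < m := by omega
    by_contra hyB
    have hyC : y ∈ CsetF σ := mem_CsetF.mpr ⟨hym, hyB⟩
    have := extE_consec σ hyC hi hy1
    omega
  intro x hx1 hx2
  obtain ⟨l, r, h1, h2, h3, h4, h5⟩ := hInGap x (by omega) hx2
  have hl : extE σ i < l := by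
    by_contra hcon
    push_neg at hcon
    have hiBV : InBV σ (extE σ i) := ⟨l, r, h1, hcon, by omega, h4, h5⟩
    have hiC : extE σ i ∈ CsetF σ := by
      rw [extE, dif_pos hi]
      exact cE_mem σ _
    exact (mem_CsetF.mp hiC).2 hiBV
  have hr : r ≤ extE σ (i+1) := by
    by_contra hcon
    push_neg at hcon
    have hnBV : InBV σ (extE σ (i+1)) := ⟨l, r, h1, by omega, hcon, h4, h5⟩
    rcases Nat.lt_or_ge (i+1) (jE σ) with h | h
    · have hnC : extE σ (i+1) ∈ CsetF σ := by
        rw [extE, dif_pos h]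
        exact cE_mem σ _
      exact (mem_CsetF.mp hnC).2 hnBV
    · have := inBV_lt hnBV
      rw [extE_top σ (i+1) h] at this
      omega
  have := h5 x h2 h3
  omega

lemma ap_mem_CsetF {x : ℕ} (hx : x ∈ CsetF σ) : ap σ x ∈ CsetF σ := by
  obtain ⟨hxm, hxB⟩ := mem_CsetF.mp hx
  exact mem_CsetF.mpr ⟨ap_lt σ hxm, fun h => hxB (inBV_ap.mpr h)⟩

/-- the induced permutation on C -/
def tauE : Equiv.Perm (Fin (jE σ)) :=
  Equiv.ofBijective
    (fun i => ((CsetF σ).orderIsoOfFin rfl).symm ⟨ap σ (cE σ i), ap_mem_CsetF σ (cE_mem σ i)⟩)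
    (Finite.injective_iff_bijective.mp (by
      intro i i' h
      have h2 := congrArg (((CsetF σ).orderIsoOfFin rfl)) h
      rw [OrderIso.apply_symm_apply, OrderIso.apply_symm_apply] at h2
      have h3 : ap σ (cE σ i) = ap σ (cE σ i') := congrArg Subtype.val h2
      exact (cE_mono σ).injective (ap_inj σ h3)))

lemma cE_tauE (i : Fin (jE σ)) : cE σ (tauE σ i) = ap σ (cE σ i) := by
  have h : cE σ (tauE σ i) =
      ((CsetF σ).orderIsoOfFin rfl ((CsetF σ).orderIsoOfFin rfl |>.symm
        ⟨ap σ (cE σ i), ap_mem_CsetF σ (cE_mem σ i)⟩)).val := by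
    rw [cE]
    rfl
  rw [h, OrderIso.apply_symm_apply]

def szE (i : ℕ) : ℕ := extE σ (i+1) - extE σ i - 1

lemma extE_succ_eq (i : ℕ) (hi : i < jE σ) :
    extE σ (i+1) = extE σ i + 1 + szE σ i := by
  have := extE_succ_gt σ i hi
  rw [szE]
  omega

/-- block permutations -/
def piE (i : Fin (jE σ)) : Equiv.Perm (Fin (szE σ i.val)) :=
  Equiv.ofBijective
    (fun o => ⟨ap σ (extE σ i.val + 1 + o.val) - (extE σ i.val + 1), by
      have hgt := extE_succ_eq σ i.val i.2
      have hin := gap_stab σ i.val i.2 (extE σ i.val + 1 + o.val) (by omega) (by omega)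
      omega⟩)
    (Finite.injective_iff_bijective.mp (by
      intro o o' h
      have h2 : ap σ (extE σ i.val + 1 + o.val) - (extE σ i.val + 1)
          = ap σ (extE σ i.val + 1 + o'.val) - (extE σ i.val + 1) := congrArg Fin.val h
      have h3 := gap_stab σ i.val i.2 (extE σ i.val + 1 + o.val)
        (by omega) (by have := extE_succ_eq σ i.val i.2; have := o.2; omega)
      have h4 := gap_stab σ i.val i.2 (extE σ i.val + 1 + o'.val)
        (by omega) (by have := extE_succ_eq σ i.val i.2; have := o'.2; omega)
      have h5 : ap σ (extE σ i.val + 1 + o.val) = ap σ (extE σ i.val + 1 + o'.val) := by omega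
      have h6 := ap_inj σ h5
      exact Fin.ext (by omega)))

lemma ap_piE (i : Fin (jE σ)) {o : ℕ} (ho : o < szE σ i.val) :
    ap (piE σ i) o = ap σ (extE σ i.val + 1 + o) - (extE σ i.val + 1) := by
  rw [ap, dif_pos ho]
  rfl

def bE : Fin (jE σ) → PPiece := fun i => ⟨szE σ i.val, piE σ i⟩

lemma ccB_extE (hm : 0 < m) : ∀ i, i ≤ jE σ → ccB (jE σ) (bE σ) i = extE σ i := by
  intro i
  induction i with
  | zero =>
    intro _
    rw [ccB_zero, extE, dif_pos (jE_pos σ hm)]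
    exact (cE_zero σ hm).symm
  | succ i ih =>
    intro hi
    have hi' : i < jE σ := by omega
    rw [ccB_succ, ih (by omega), extE_succ_eq σ i hi']
    have hsz : szB (jE σ) (bE σ) i = szE σ i := dif_pos hi'
    omega

lemma hsE (hm : 0 < m) : jE σ + ptot (bE σ) = m := by
  have h1 := ccB_extE σ hm (jE σ) (le_refl _)
  rw [ccB_self, extE_top σ _ (le_refl _)] at h1
  exact h1

end Extract

section Extract2

variable (σ : Equiv.Perm (Fin m)) (hm : 0 < m)

include hm

lemma coreStab (a bb : Fin (jE σ))
    (hmap : ∀ t, a ≤ t → t ≤ bb → a ≤ tauE σ t ∧ tauE σ t ≤ bb) :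
    StabN σ (cE σ a) (extE σ (bb.val+1)) := by
  intro x hx1 hx2
  have hxm : x < m := lt_of_lt_of_le hx2 (extE_le σ _)
  have hs := hsE σ hm
  set i := idxB (jE σ) (bE σ) x with hidef
  have hi : i < jE σ := idxB_lt _ _ (jE_pos σ hm) x
  have h1 : extE σ i ≤ x := by
    have h := idxB_le (jE σ) (bE σ) x
    rwa [ccB_extE σ hm i (by omega)] at h
  have h2 : x < extE σ (i+1) := by
    have h := idxB_lt_next (jE σ) (bE σ) hs x hxm
    rwa [ccB_extE σ hm (i+1) (by omega)] at h
  have hcEa : cE σ a = extE σ a.val := by rw [extE, dif_pos a.2]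
  have hai : a.val ≤ i := by
    by_contra hcon
    push_neg at hcon
    have := extE_mono σ (show i + 1 ≤ a.val by omega)
    omega
  have hib : i ≤ bb.val := by
    by_contra hcon
    push_neg at hcon
    have := extE_mono σ (show bb.val + 1 ≤ i by omega)
    omega
  by_cases he : x = extE σ i
  · have hxc : x = cE σ ⟨i, hi⟩ := by rw [he, extE, dif_pos hi]
    have htin := hmap ⟨i, hi⟩ (show a ≤ ⟨i,hi⟩ from hai) (show (⟨i,hi⟩ : Fin _) ≤ bb from hib)
    have hval : ap σ x = cE σ (tauE σ ⟨i, hi⟩) := by rw [hxc, cE_tauE]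
    constructor
    · rw [hval]
      exact (cE_mono σ).monotone htin.1
    · rw [hval]
      calc cE σ (tauE σ ⟨i,hi⟩) ≤ cE σ bb := (cE_mono σ).monotone htin.2
        _ < extE σ (bb.val + 1) := by
            have h3 := extE_succ_gt σ bb.val bb.2
            rw [extE, dif_pos bb.2] at h3
            exact h3
  · have hgap := gap_stab σ i hi x (by omega) h2
    constructor
    · have := extE_mono σ hai
      omega
    · have := extE_mono σ (show i + 1 ≤ bb.val + 1 by omega)
      omega

lemma tauE_SIF : SIF (tauE σ) := by
  intro a bb hne hnu hstab
  have hab : a ≤ bb := Finset.nonempty_Icc.mp hne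
  have hstab' : (Finset.Icc a bb).image (tauE σ) = Finset.Icc a bb := hstab
  have hmap : ∀ t, a ≤ t → t ≤ bb → a ≤ tauE σ t ∧ tauE σ t ≤ bb := by
    intro t h1 h2
    have ht : t ∈ Finset.Icc a bb := Finset.mem_Icc.mpr ⟨h1, h2⟩
    have h3 : tauE σ t ∈ Finset.Icc a bb := by
      rw [← hstab']
      exact Finset.mem_image_of_mem _ ht
    exact Finset.mem_Icc.mp h3
  have hcore := coreStab σ hm a bb hmap
  rcases Nat.eq_zero_or_pos a.val with ha0 | hapos
  · rcases Nat.lt_or_ge (bb.val + 1) (jE σ) with hb | hb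
    · have h0 : cE σ a = 0 := by
        have ha : a = ⟨0, jE_pos σ hm⟩ := Fin.ext ha0
        rw [ha, cE_zero σ hm]
      rw [h0] at hcore
      have hcompl := stabN_compl σ hcore
      have hnC : extE σ (bb.val+1) ∈ CsetF σ := by
        rw [extE, dif_pos hb]
        exact cE_mem σ _
      apply (mem_CsetF.mp hnC).2
      refine ⟨extE σ (bb.val+1), m, ?_, le_refl _, (mem_CsetF.mp hnC).1, le_refl _, hcompl⟩
      have h4 : 0 < extE σ (bb.val+1) := by
        rw [extE, dif_pos hb]
        exact cE_pos σ hm (show 0 < bb.val + 1 by omega)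
      omega
    · apply hnu
      apply Finset.eq_univ_iff_forall.mpr
      intro x
      refine Finset.mem_Icc.mpr ⟨?_, ?_⟩
      · have h5 : a.val ≤ x.val := by omega
        exact h5
      · have h6 := x.2
        have h5 : x.val ≤ bb.val := by omega
        exact h5
  · have hCa := cE_mem σ a
    apply (mem_CsetF.mp hCa).2
    refine ⟨cE σ a, extE σ (bb.val+1), ?_, le_refl _, ?_, extE_le σ _, hcore⟩
    · have := cE_pos σ hm hapos
      omega
    · have h3 : cE σ a = extE σ a.val := by rw [extE, dif_pos a.2]
      have h4 : extE σ a.val < extE σ (a.val+1) := extE_succ_gt σ a.val a.2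
      have h5 : extE σ (a.val+1) ≤ extE σ (bb.val+1) := extE_mono σ (by omega)
      omega

lemma build_extract : buildPerm (jE σ) (bE σ) (tauE σ) (hsE σ hm) = σ := by
  apply Equiv.ext
  intro x
  apply Fin.ext
  have hxm : x.val < m := x.2
  have happ : (buildPerm (jE σ) (bE σ) (tauE σ) (hsE σ hm) x).val
      = fB (jE σ) (bE σ) (tauE σ) x.val := rfl
  rw [happ, ← ap_fin σ x]
  rcases fB_pos (jE σ) (bE σ) (tauE σ) (hsE σ hm) hxm with
    ⟨i, hi1, hi2⟩ | ⟨i, o, ho, hi1, hi2⟩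
  · rw [hi2]
    have e1 : ccB (jE σ) (bE σ) i.val = cE σ i := by
      rw [ccB_extE σ hm i.val (le_of_lt i.2), extE, dif_pos i.2]
    have e2 : ccB (jE σ) (bE σ) (tauE σ i).val = cE σ (tauE σ i) := by
      rw [ccB_extE σ hm _ (le_of_lt (tauE σ i).2), extE, dif_pos (tauE σ i).2]
    rw [e2, cE_tauE, hi1, e1]
  · rw [hi2, hi1]
    have e1 : ccB (jE σ) (bE σ) i.val = extE σ i.val := ccB_extE σ hm i.val (le_of_lt i.2)
    have hosz : o < szE σ i.val := ho
    have e3 := ap_piE σ i hosz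
    have hgap := gap_stab σ i.val i.2 (extE σ i.val + 1 + o) (by omega)
      (by rw [extE_succ_eq σ i.val i.2]; omega)
    rw [e1]
    show extE σ i.val + 1 + ap (piE σ i) o = ap σ (extE σ i.val + 1 + o)
    rw [e3]
    omega

end Extract2

lemma ppiece_ext {p q : PPiece} (h1 : p.1 = q.1) (h2 : ∀ o, ap p.2 o = ap q.2 o) : p = q := by
  obtain ⟨s, π⟩ := p
  obtain ⟨s', π'⟩ := q
  dsimp only at h1
  subst h1
  have h4 : π = π' := by
    apply Equiv.ext
    intro z
    apply Fin.ext
    have h3 := h2 z.val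
    rw [ap, dif_pos z.2, ap, dif_pos z.2] at h3
    exact h3
  rw [h4]

section BuildInj

variable {j : ℕ} {b b' : Fin j → PPiece} {τ τ' : Equiv.Perm (Fin j)}
  {hs : j + ptot b = m} {hs' : j + ptot b' = m}

lemma ccB_val_inj : Function.Injective (fun i : Fin j => ccB j b i.val) :=
  fun i i' h => Fin.ext ((ccB_mono j b).injective h)

lemma build_card (hτ : SIF τ) (hm : 0 < m) :
    (CsetF (buildPerm j b τ hs)).card = j := by
  rw [build_CsetF j b τ hs hτ hm,
    Finset.card_image_of_injective _ (ccB_val_inj (b := b)), Finset.card_univ,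
    Fintype.card_fin]

lemma build_inj (hτ : SIF τ) (hτ' : SIF τ') (hm : 0 < m)
    (heq : buildPerm j b τ hs = buildPerm j b' τ' hs') : b = b' ∧ τ = τ' := by
  set σ := buildPerm j b τ hs with hσ
  have hC := build_CsetF j b τ hs hτ hm
  have hC' := build_CsetF j b' τ' hs' hτ' hm
  rw [← heq] at hC'
  have hcard : (CsetF σ).card = j := build_card hτ hm
  have e1 := Finset.orderEmbOfFin_unique (f := fun i : Fin j => ccB j b i.val) hcard
    (fun i => by rw [hC]; exact Finset.mem_image_of_mem _ (Finset.mem_univ i))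
    (fun i i' h => ccB_mono j b h)
  have e2 := Finset.orderEmbOfFin_unique (f := fun i : Fin j => ccB j b' i.val) hcard
    (fun i => by rw [hC']; exact Finset.mem_image_of_mem _ (Finset.mem_univ i))
    (fun i i' h => ccB_mono j b' h)
  have hcc : ∀ i : Fin j, ccB j b i.val = ccB j b' i.val := fun i =>
    (congrFun e1 i).trans (congrFun e2 i).symm
  have hccN : ∀ i, i ≤ j → ccB j b i = ccB j b' i := by
    intro i hi
    rcases eq_or_lt_of_le hi with h | h
    · subst h
      rw [ccB_self, ccB_self]
      omega
    · exact hcc ⟨i, h⟩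
  have hsz : ∀ i : Fin j, (b i).1 = (b' i).1 := by
    intro i
    have h1 := ccB_succ j b i.val
    have h2 := ccB_succ j b' i.val
    have e3 := hccN i.val (le_of_lt i.2)
    have e4 := hccN (i.val+1) i.2
    have s1 : szB j b i.val = (b i).1 := dif_pos i.2
    have s2 : szB j b' i.val = (b' i).1 := dif_pos i.2
    omega
  have htau : τ = τ' := by
    apply Equiv.ext
    intro i
    apply Fin.ext
    have h1 : ap σ (ccB j b i.val) = ccB j b (τ i).val := by
      rw [ap_build j b τ hs (ccB_lt_m j b hs i.2), fB_c j b τ hs i]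
    have h2 : ap (buildPerm j b' τ' hs') (ccB j b' i.val) = ccB j b' (τ' i).val := by
      rw [ap_build j b' τ' hs' (ccB_lt_m j b' hs' i.2), fB_c j b' τ' hs' i]
    rw [← heq] at h2
    rw [hcc i] at h1
    rw [h1] at h2
    have h3 : ccB j b (τ i).val = ccB j b (τ' i).val := by
      rw [h2, hccN (τ' i).val (le_of_lt (τ' i).2)]
    exact (ccB_mono j b).injective h3
  refine ⟨funext fun i => ppiece_ext (hsz i) fun o => ?_, htau⟩
  rcases Nat.lt_or_ge o (b i).1 with ho | ho
  · have ho' : o < (b' i).1 := by rw [← hsz i]; exact ho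
    have hxlt : ccB j b i.val + 1 + o < m := by
      have hA := ccB_succ j b i.val
      have hB : szB j b i.val = (b i).1 := dif_pos i.2
      have hc : ccB j b (i.val + 1) ≤ m := by
        have h6 := (ccB_mono j b).monotone (show i.val + 1 ≤ j by omega)
        rw [ccB_top j b hs] at h6
        exact h6
      omega
    have h1 : ap σ (ccB j b i.val + 1 + o) = ccB j b i.val + 1 + ap (b i).2 o := by
      rw [ap_build j b τ hs hxlt, fB_b j b τ hs i ho]
    have hxlt' : ccB j b' i.val + 1 + o < m := by rw [← hccN i.val (le_of_lt i.2)]; exact hxlt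
    have h2 : ap (buildPerm j b' τ' hs') (ccB j b' i.val + 1 + o)
        = ccB j b' i.val + 1 + ap (b' i).2 o := by
      rw [ap_build j b' τ' hs' hxlt', fB_b j b' τ' hs' i ho']
    rw [← heq] at h2
    rw [hccN i.val (le_of_lt i.2)] at h1
    rw [h1] at h2
    omega
  · have ho' : ¬ o < (b' i).1 := by rw [← hsz i]; omega
    rw [ap_big _ (by omega), ap_big _ ho']

end BuildInj

end PartAProof

abbrev DTy (m : ℕ) : Type :=
  Σ x : {x : ℕ × ℕ // x ∈ Finset.HasAntidiagonal.antidiagonal m},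
    {τ : Equiv.Perm (Fin x.1.1) // SIF τ} × TL (fun _ => True) x.1.1 x.1.2

def PsiMap (m : ℕ) : DTy m → Equiv.Perm (Fin m) := fun d =>
  buildPerm d.1.1.1 d.2.2.1 d.2.1.1 (by
    have h1 := d.2.2.2.2
    have h2 := Finset.HasAntidiagonal.mem_antidiagonal.mp d.1.2
    omega)

lemma Psi_bij {m : ℕ} (hm : 0 < m) : Function.Bijective (PsiMap m) := by
  constructor
  · rintro ⟨⟨⟨j, t⟩, hx⟩, ⟨τ, hτ⟩, ⟨bf, hP, hpt⟩⟩ ⟨⟨⟨j', t'⟩, hx'⟩, ⟨τ', hτ'⟩, ⟨bf', hP', hpt'⟩⟩ heq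
    have hx2 : j + t = m := Finset.HasAntidiagonal.mem_antidiagonal.mp hx
    have hx2' : j' + t' = m := Finset.HasAntidiagonal.mem_antidiagonal.mp hx'
    have hpt2 : ptot bf = t := hpt
    have hpt2' : ptot bf' = t' := hpt'
    dsimp only [PsiMap] at heq
    have hj : j = j' := by
      have c1 := build_card (b := bf) (τ := τ) (hs := by show j + ptot bf = m; omega) hτ hm
      have c2 := build_card (b := bf') (τ := τ') (hs := by show j' + ptot bf' = m; omega) hτ' hm
      rw [heq] at c1
      rw [c1] at c2
      exact c2
    subst hj
    have ht : t = t' := by omega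
    subst ht
    obtain ⟨hb, htau⟩ := build_inj hτ hτ' hm heq
    subst hb
    subst htau
    rfl
  · intro σ
    refine ⟨⟨⟨⟨jE σ, ptot (bE σ)⟩, Finset.HasAntidiagonal.mem_antidiagonal.mpr (hsE σ hm)⟩,
      ⟨tauE σ, tauE_SIF σ hm⟩, ⟨bE σ, fun i => trivial, rfl⟩⟩, ?_⟩
    show buildPerm (jE σ) (bE σ) (tauE σ) _ = σ
    exact build_extract σ hm

lemma aS_zero : aS 0 = 1 := by
  rw [aS, Nat.card_eq_one_iff_unique]
  constructor
  · constructor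
    rintro ⟨σ1, h1⟩ ⟨σ2, h2⟩
    apply Subtype.ext
    apply Equiv.ext
    intro z
    exact z.elim0
  · exact ⟨⟨1, fun a b hne hnu hst => a.elim0⟩⟩

lemma factR (m : ℕ) :
    m.factorial = ∑ x ∈ Finset.HasAntidiagonal.antidiagonal m, aS x.1 * gc TrueP x.1 x.2 := by
  rcases Nat.eq_zero_or_pos m with rfl | hm
  · simp [Finset.Nat.antidiagonal_zero, aS_zero, gc_zero]
  · classical
    have e : Equiv.Perm (Fin m) ≃ DTy m := (Equiv.ofBijective _ (Psi_bij hm)).symm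
    have h1 : m.factorial = Nat.card (Equiv.Perm (Fin m)) := by
      rw [Nat.card_eq_fintype_card, Fintype.card_perm, Fintype.card_fin]
    rw [h1, Nat.card_congr e, ncard_sigma, ← Finset.sum_coe_sort (Finset.HasAntidiagonal.antidiagonal m)]
    exact Fintype.sum_congr _ _ fun x => Nat.card_prod _ _

def Wps : PowerSeries ℕ := PowerSeries.X * Fps

lemma W_pow_mul (j k : ℕ) : Wps ^ j * Fps ^ k = Fps ^ (j + k) * PowerSeries.X ^ j := by
  rw [Wps, mul_pow, pow_add]; ring

lemma coeff_W_pow (j k n : ℕ) :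
    PowerSeries.coeff n (Wps ^ j * Fps ^ k) =
      if j ≤ n then gc TrueP (j + k) (n - j) else 0 := by
  rw [W_pow_mul, PowerSeries.coeff_mul_X_pow', coeff_F_pow]

def Ffin (m : ℕ) : PowerSeries ℕ :=
  ∑ j ∈ Finset.range (m+1), (PowerSeries.C (aS j)) * Wps ^ j

lemma coeff_Ffin {m t : ℕ} (h : t ≤ m) :
    PowerSeries.coeff t (Ffin m) = t.factorial := by
  rw [Ffin, map_sum]
  have step : ∀ j ∈ Finset.range (m+1),
      PowerSeries.coeff t ((PowerSeries.C (aS j)) * Wps ^ j) =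
        aS j * (if j ≤ t then gc TrueP j (t - j) else 0) := by
    intro j hj
    rw [PowerSeries.coeff_C_mul]
    congr 1
    have := coeff_W_pow j 0 t
    rw [pow_zero, mul_one] at this
    rw [this, add_zero]
  rw [Finset.sum_congr rfl step]
  rw [factR t, Finset.Nat.sum_antidiagonal_eq_sum_range_succ_mk]
  rw [← Finset.sum_subset (Finset.range_subset_range.mpr (by omega : t + 1 ≤ m + 1))]
  · refine Finset.sum_congr rfl fun j hj => ?_
    have hj' : j ≤ t := by simpa [Nat.lt_succ_iff] using hj
    rw [if_pos hj']
  · intro j _ hj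
    have hj' : ¬ j ≤ t := by
      intro hle
      exact hj (Finset.mem_range.mpr (by omega))
    rw [if_neg hj', mul_zero]

lemma Hrec (k m : ℕ) :
    gc TrueP (k+1) m = ∑ j ∈ Finset.range (m+1), aS j * gc TrueP (k+j) (m-j) := by
  have h1 : gc TrueP (k+1) m = PowerSeries.coeff m (Fps * Fps^k) := by
    rw [← coeff_F_pow, pow_succ']
  rw [h1, PowerSeries.coeff_mul]
  have h2 : ∀ p ∈ Finset.HasAntidiagonal.antidiagonal m,
      (PowerSeries.coeff p.1 Fps) * PowerSeries.coeff p.2 (Fps^k) =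
      (PowerSeries.coeff p.1 (Ffin m)) * PowerSeries.coeff p.2 (Fps^k) := by
    intro p hp
    have hp1 : p.1 ≤ m := by
      have := Finset.HasAntidiagonal.mem_antidiagonal.mp hp; omega
    rw [coeff_Ffin hp1]
    simp [Fps, PowerSeries.coeff_mk]
  rw [Finset.sum_congr rfl h2, ← PowerSeries.coeff_mul, Ffin, Finset.sum_mul, map_sum]
  refine Finset.sum_congr rfl fun j hj => ?_
  have hj' : j ≤ m := by simpa [Nat.lt_succ_iff] using hj
  rw [mul_assoc, PowerSeries.coeff_C_mul, coeff_W_pow, if_pos hj', add_comm j k]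

-- ===== Luk layer =====
def szf {n : ℕ} (b : Fin n → PPiece) (i : ℕ) : ℕ := if h : i < n then (b ⟨i, h⟩).1 else 0

def DomN (k : ℕ) {n : ℕ} (b : Fin n → PPiece) : Prop :=
  ∀ t, t < n → t + 1 ≤ k + ∑ i ∈ Finset.range t, szf b i

def LukT (k n : ℕ) : Type :=
  {b : Fin n → PPiece // (∀ i, SIFp (b i)) ∧ ptot b + k = n ∧ DomN k b}

instance (k n : ℕ) : Finite (LukT k n) := by
  refine Finite.of_injective (β := Fin n → {p : PPiece // p.1 ≤ n})
    (fun b i => ⟨b.1 i, le_trans (ptot_bound b.1 i) (Nat.le.intro b.2.2.1)⟩) ?_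
  intro b b' h
  apply Subtype.ext; funext i
  exact congrArg Subtype.val (congrFun h i)

def lk (k n : ℕ) : ℕ := Nat.card (LukT k n)

lemma szf_cons_zero {n : ℕ} (p : PPiece) (f : Fin n → PPiece) :
    szf (Fin.cons p f) 0 = p.1 := by
  simp [szf]

lemma szf_cons_succ {n : ℕ} (p : PPiece) (f : Fin n → PPiece) (i : ℕ) :
    szf (Fin.cons p f) (i+1) = szf f i := by
  rcases lt_or_ge i n with h | h
  · rw [szf, szf, dif_pos h, dif_pos (by omega : i + 1 < n + 1)]
    rw [show (⟨i+1, by omega⟩ : Fin (n+1)) = (⟨i, h⟩ : Fin n).succ from rfl, Fin.cons_succ]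
  · rw [szf, szf, dif_neg (by omega), dif_neg (by omega)]

lemma sum_szf_cons {n : ℕ} (p : PPiece) (f : Fin n → PPiece) (t : ℕ) :
    ∑ i ∈ Finset.range (t+1), szf (Fin.cons p f) i =
      p.1 + ∑ i ∈ Finset.range t, szf f i := by
  rw [Finset.sum_range_succ']
  simp only [szf_cons_succ, szf_cons_zero]
  omega


lemma sum_szf_tail {n : ℕ} (bf : Fin (n+1) → PPiece) (t : ℕ) :
    ∑ i ∈ Finset.range (t+1), szf bf i =
      (bf 0).1 + ∑ i ∈ Finset.range t, szf (fun i : Fin n => bf i.succ) i := by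
  conv_lhs => rw [← Fin.cons_self_tail bf]
  rw [sum_szf_cons]
  rfl

def lukEquiv (k m : ℕ) : LukT (k+1) (m+k+1) ≃
    Σ x : {x : ℕ × ℕ // x ∈ Finset.HasAntidiagonal.antidiagonal m},
      {σ : Equiv.Perm (Fin x.1.1) // SIF σ} × LukT (k + x.1.1) (m + k) where
  toFun := fun ⟨bf, hS, hsum, hdom⟩ =>
    ⟨⟨((bf 0).1, ptot fun i => bf i.succ), Finset.HasAntidiagonal.mem_antidiagonal.mpr (by
        have h : ptot bf = (bf 0).1 + ptot fun i => bf i.succ :=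
          Fin.sum_univ_succ fun i => (bf i).1
        omega)⟩,
      ⟨(bf 0).2, hS 0⟩,
      ⟨fun i => bf i.succ, fun i => hS i.succ, (by
        have h : ptot bf = (bf 0).1 + ptot fun i => bf i.succ :=
          Fin.sum_univ_succ fun i => (bf i).1
        have hb : (bf 0).1 ≤ ptot bf := ptot_bound bf 0
        show (ptot fun i => bf i.succ) + (k + (bf 0).1) = m + k
        omega), (by
        intro t ht
        have hd := hdom (t+1) (by omega)
        rw [sum_szf_tail] at hd
        show t + 1 ≤ k + (bf 0).1 + ∑ i ∈ Finset.range t, szf (fun i => bf i.succ) i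
        omega)⟩⟩
  invFun := fun ⟨⟨⟨s, t⟩, hx⟩, ⟨σ, hσ⟩, ⟨f, h1, h2, h3⟩⟩ =>
    ⟨Fin.cons ⟨s, σ⟩ f, fun i => Fin.cases hσ h1 i, (by
        have h : ptot (Fin.cons (⟨s, σ⟩ : PPiece) f) = s + ptot f := by
          rw [ptot, Fin.sum_univ_succ]
          simp only [Fin.cons_zero, Fin.cons_succ]
          rfl
        have hx' := Finset.HasAntidiagonal.mem_antidiagonal.mp hx
        have h2' : ptot f + (k + s) = m + k := h2
        rw [h]
        omega), (by
        intro t' ht'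
        match t' with
        | 0 => simp
        | (u+1) =>
          have hd : u + 1 ≤ k + s + ∑ i ∈ Finset.range u, szf f i := h3 u (by omega)
          rw [sum_szf_cons]
          show u + 1 + 1 ≤ k + 1 + (s + ∑ i ∈ Finset.range u, szf f i)
          omega)⟩
  left_inv := fun ⟨bf, _, _, _⟩ => Subtype.ext (Fin.cons_self_tail bf)
  right_inv := fun ⟨⟨⟨s, t⟩, hx⟩, ⟨σ, hσ⟩, ⟨f, h1, h2, h3⟩⟩ => by
    have ht : ptot f = t := by
      have hx' := Finset.HasAntidiagonal.mem_antidiagonal.mp hx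
      dsimp only at h2 ⊢
      omega
    subst ht
    rfl

lemma lk_succ (k m : ℕ) :
    lk (k+1) (m+k+1) = ∑ x ∈ Finset.HasAntidiagonal.antidiagonal m, aS x.1 * lk (k+x.1) (m+k) := by
  rw [lk, Nat.card_congr (lukEquiv k m), ncard_sigma,
    ← Finset.sum_coe_sort (Finset.HasAntidiagonal.antidiagonal m)]
  exact Fintype.sum_congr _ _ fun x => Nat.card_prod _ _

lemma lk_zero_zero : lk 0 0 = 1 := by
  rw [lk, Nat.card_eq_one_iff_unique]
  constructor
  · constructor
    rintro ⟨b, hb⟩ ⟨b', hb'⟩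
    apply Subtype.ext; funext i; exact i.elim0
  · refine ⟨⟨fun i => i.elim0, fun i => i.elim0, by simp [ptot], fun t ht => by omega⟩⟩

lemma lk_zero_pos (n : ℕ) (h : 0 < n) : lk 0 n = 0 := by
  have : IsEmpty (LukT 0 n) := ⟨fun b => by
    have := b.2.2.2 0 h
    simp at this⟩
  rw [lk]; exact Nat.card_of_isEmpty

theorem LH : ∀ m k : ℕ, lk k (m+k) = gc TrueP k m := by
  suffices H : ∀ N m k, m + k = N → lk k (m+k) = gc TrueP k m from
    fun m k => H (m+k) m k rfl
  intro N
  induction N using Nat.strong_induction_on with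
  | _ N ih =>
    intro m k hN
    match k with
    | 0 =>
      match m with
      | 0 => rw [lk_zero_zero, gc_zero]; rfl
      | (m+1) => rw [Nat.add_zero, lk_zero_pos _ (by omega), gc_zero, if_neg (by omega)]
    | (k'+1) =>
      rw [show m + (k'+1) = m + k' + 1 from rfl, lk_succ k' m,
        Finset.Nat.sum_antidiagonal_eq_sum_range_succ_mk, Hrec]
      refine Finset.sum_congr rfl fun j hj => ?_
      have hj' : j ≤ m := by simpa [Nat.lt_succ_iff] using hj
      congr 1
      rw [show m + k' = (m - j) + (k' + j) by omega]
      exact ih ((m - j) + (k' + j)) (by omega) (m - j) (k' + j) rfl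


-- ===== cycle lemma =====
section Cycle

variable {n : ℕ}

def vP (b : Fin n → PPiece) (t : ℕ) : ℕ := szf b (t % n)

lemma vP_period (b : Fin n → PPiece) (t : ℕ) : vP b (t + n) = vP b t := by
  simp [vP, Nat.add_mod_right]

def Sz (b : Fin n → PPiece) (t : ℕ) : ℤ := (∑ i ∈ Finset.range t, (vP b i : ℤ)) - t

lemma Sz_succ (b : Fin n → PPiece) (t : ℕ) :
    Sz b (t+1) = Sz b t + vP b t - 1 := by
  simp [Sz, Finset.sum_range_succ]; ring

lemma Sz_shift (b : Fin n → PPiece) (x t : ℕ) :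
    (∑ u ∈ Finset.range t, (vP b (x+u) : ℤ)) = Sz b (x+t) - Sz b x + t := by
  induction t with
  | zero => simp
  | succ t ih =>
    rw [Finset.sum_range_succ, ih, show x + (t+1) = (x+t)+1 from rfl, Sz_succ]
    push_cast
    ring

lemma sum_vP_shift (b : Fin n → PPiece) (x : ℕ) :
    ∑ u ∈ Finset.range n, vP b (x + u) = ∑ u ∈ Finset.range n, vP b u := by
  induction x with
  | zero => simp
  | succ x ih =>
    have e1 : ∑ u ∈ Finset.range (n+1), vP b (x+u) =
        (∑ u ∈ Finset.range n, vP b (x+u)) + vP b (x+n) := Finset.sum_range_succ _ n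
    have e2 : ∑ u ∈ Finset.range (n+1), vP b (x+u) =
        (∑ u ∈ Finset.range n, vP b ((x+1)+u)) + vP b x := by
      rw [Finset.sum_range_succ' (fun u => vP b (x+u)) n, Nat.add_zero]
      congr 1
      exact Finset.sum_congr rfl fun u _ => by rw [show x + (u+1) = (x+1)+u by omega]
    rw [vP_period] at e1
    omega

lemma Sz_period (b : Fin n → PPiece) (hn : 0 < n)
    (hv : ∑ u ∈ Finset.range n, vP b u = n - 1) (x : ℕ) :
    Sz b (x + n) = Sz b x - 1 := by
  have h1 := Sz_shift b x n
  have h2 := sum_vP_shift b x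
  have h3 : (∑ u ∈ Finset.range n, (vP b (x+u) : ℤ)) =
      ((∑ u ∈ Finset.range n, vP b (x+u) : ℕ) : ℤ) := by push_cast; rfl
  rw [h3, h2, hv] at h1
  omega

def GoodS (b : Fin n → PPiece) (i : ℕ) : Prop := ∀ t, t < n → Sz b i ≤ Sz b (i + t)

lemma CLcore (b : Fin n → PPiece) (hn : 0 < n)
    (hv : ∑ u ∈ Finset.range n, vP b u = n - 1) :
    ∃! i : ℕ, i < n ∧ GoodS b i := by
  classical
  have hne : ((Finset.range n).image (Sz b)).Nonempty :=
    (Finset.nonempty_range_iff.mpr (by omega)).image _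
  set μ := ((Finset.range n).image (Sz b)).min' hne with hμ
  have hmem : μ ∈ (Finset.range n).image (Sz b) := Finset.min'_mem _ _
  obtain ⟨t₀, ht₀, ht₀'⟩ := Finset.mem_image.mp hmem
  set T := (Finset.range n).filter (fun t => Sz b t = μ) with hT
  have hTne : T.Nonempty := ⟨t₀, Finset.mem_filter.mpr ⟨ht₀, ht₀'⟩⟩
  set i₀ := T.min' hTne with hi₀
  have hi₀T : i₀ ∈ T := Finset.min'_mem _ _
  have hi₀n : i₀ < n := Finset.mem_range.mp (Finset.mem_filter.mp hi₀T).1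
  have hi₀μ : Sz b i₀ = μ := (Finset.mem_filter.mp hi₀T).2
  have hmin : ∀ j, j < n → μ ≤ Sz b j := fun j hj =>
    Finset.min'_le _ _ (Finset.mem_image_of_mem _ (Finset.mem_range.mpr hj))
  have hfirst : ∀ j, j < i₀ → μ < Sz b j := by
    intro j hj
    have hjn : j < n := by omega
    rcases lt_or_eq_of_le (hmin j hjn) with h | h
    · exact h
    · exfalso
      have : j ∈ T := Finset.mem_filter.mpr ⟨Finset.mem_range.mpr hjn, h.symm⟩
      have := Finset.min'_le _ _ this
      omega
  refine ⟨i₀, ⟨hi₀n, ?_⟩, ?_⟩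
  · intro t ht
    rcases lt_or_ge (i₀ + t) n with h | h
    · rw [hi₀μ]; exact hmin _ h
    · have hj : i₀ + t - n < i₀ := by omega
      have he := Sz_period b hn hv (i₀ + t - n)
      rw [show i₀ + t - n + n = i₀ + t by omega] at he
      have := hfirst _ hj
      omega
  · rintro i' ⟨hi'n, hgood'⟩
    by_contra hne'
    have hne2 : i' ≠ i₀ := hne'
    rcases lt_trichotomy i' i₀ with h | h | h
    · have h1 := hgood' (i₀ - i') (by omega)
      rw [show i' + (i₀ - i') = i₀ by omega] at h1
      have h4 := hfirst i' h
      omega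
    · exact hne2 h
    · have h2 := hgood' (n - (i' - i₀)) (by omega)
      rw [show i' + (n - (i' - i₀)) = i₀ + n by omega] at h2
      have h3 := Sz_period b hn hv i₀
      have h5 : μ ≤ Sz b i' := hmin i' hi'n
      omega

lemma sum_szf (b : Fin n → PPiece) : ∑ u ∈ Finset.range n, szf b u = ptot b := by
  rw [← Fin.sum_univ_eq_sum_range (szf b) n]
  exact Fintype.sum_congr _ _ fun i => by rw [szf, dif_pos i.2]

lemma sum_vP (b : Fin n → PPiece) : ∑ u ∈ Finset.range n, vP b u = ptot b := by
  rw [← sum_szf b]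
  exact Finset.sum_congr rfl fun u hu => by
    rw [vP, Nat.mod_eq_of_lt (Finset.mem_range.mp hu)]

def rotF [NeZero n] (i : Fin n) (b : Fin n → PPiece) : Fin n → PPiece := fun x => b (x + i)

lemma rotF_rotF [NeZero n] (i j : Fin n) (b : Fin n → PPiece) :
    rotF j (rotF i b) = rotF (j + i) b :=
  funext fun x => congrArg b (add_assoc x j i)

lemma rotF_zero [NeZero n] (b : Fin n → PPiece) : rotF 0 b = b :=
  funext fun x => congrArg b (add_zero x)

lemma ptot_rotF [NeZero n] (i : Fin n) (b : Fin n → PPiece) : ptot (rotF i b) = ptot b :=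
  Fintype.sum_equiv (Equiv.addRight i) _ _ (fun x => rfl)

lemma szf_rotF [NeZero n] (i : Fin n) (b : Fin n → PPiece) (u : ℕ) (hu : u < n) :
    szf (rotF i b) u = vP b (i.val + u) := by
  rw [szf, dif_pos hu, vP, szf]
  have hn : 0 < n := Nat.pos_of_ne_zero (NeZero.ne n)
  have hmod : (i.val + u) % n < n := Nat.mod_lt _ (by omega)
  rw [dif_pos hmod]
  show (b (⟨u, hu⟩ + i)).1 = (b ⟨(i.val + u) % n, hmod⟩).1
  refine congrArg (fun z => (b z).1) (Fin.ext ?_)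
  rw [Fin.add_def]
  show (u + i.val) % n = (i.val + u) % n
  rw [Nat.add_comm]

lemma dom_iff [NeZero n] (b : Fin n → PPiece) (i : Fin n) :
    DomN 1 (rotF i b) ↔ GoodS b i.val := by
  have key : ∀ t, t < n →
      ((t + 1 ≤ 1 + ∑ u ∈ Finset.range t, szf (rotF i b) u) ↔
        Sz b i.val ≤ Sz b (i.val + t)) := by
    intro t ht
    have hs : ∑ u ∈ Finset.range t, szf (rotF i b) u
        = ∑ u ∈ Finset.range t, vP b (i.val + u) :=
      Finset.sum_congr rfl fun u hu =>
        szf_rotF i b u (by have := Finset.mem_range.mp hu; omega)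
    have hz := Sz_shift b i.val t
    have hcast : (∑ u ∈ Finset.range t, (vP b (i.val + u) : ℤ)) =
        ((∑ u ∈ Finset.range t, vP b (i.val + u) : ℕ) : ℤ) := by push_cast; rfl
    rw [hcast] at hz
    rw [hs]
    omega
  constructor
  · intro h t ht
    exact (key t ht).mp (h t ht)
  · intro h t ht
    exact (key t ht).mpr (h t ht)

lemma card_dom_unique [NeZero n] (b : Fin n → PPiece) (hb : ptot b = n - 1) :
    Nat.card {i : Fin n // DomN 1 (rotF i b)} = 1 := by
  have hn : 0 < n := Nat.pos_of_ne_zero (NeZero.ne n)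
  have hv : ∑ u ∈ Finset.range n, vP b u = n - 1 := by rw [sum_vP, hb]
  obtain ⟨i₀, ⟨hi₀n, hgood⟩, huniq⟩ := CLcore b hn hv
  rw [Nat.card_eq_one_iff_unique]
  constructor
  · constructor
    rintro ⟨i, hi⟩ ⟨j, hj⟩
    have h1 : i.val = i₀ := huniq i.val ⟨i.2, (dom_iff b i).mp hi⟩
    have h2 : j.val = i₀ := huniq j.val ⟨j.2, (dom_iff b j).mp hj⟩
    apply Subtype.ext
    apply Fin.ext
    show i.val = j.val
    omega
  · exact ⟨⟨⟨i₀, hi₀n⟩, (dom_iff b ⟨i₀, hi₀n⟩).mpr hgood⟩⟩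

def cycEquiv (n : ℕ) [NeZero n] :
    (Σ L : TL SIFp n (n-1), {i : Fin n // DomN 1 (rotF i L.1)}) ≃ Fin n × LukT 1 n where
  toFun := fun ⟨L, i, hi⟩ => (i, ⟨rotF i L.1, fun x => L.2.1 _, by
      rw [ptot_rotF, L.2.2]
      have hn : 0 < n := Nat.pos_of_ne_zero (NeZero.ne n)
      omega, hi⟩)
  invFun := fun p => ⟨⟨rotF (-p.1) p.2.1, fun x => p.2.2.1 _, by
      rw [ptot_rotF]
      have h := p.2.2.2.1
      omega⟩, p.1, by
      rw [rotF_rotF, add_neg_cancel, rotF_zero]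
      exact p.2.2.2.2⟩
  left_inv := fun ⟨L, i, hi⟩ => by
    have h1 : rotF (-i) (rotF i L.1) = L.1 := by
      rw [rotF_rotF, neg_add_cancel, rotF_zero]
    refine Sigma.ext (Subtype.ext h1) ?_
    refine (Subtype.heq_iff_coe_eq ?_).mpr rfl
    intro x
    show DomN 1 (rotF x (rotF (-i) (rotF i L.1))) ↔ DomN 1 (rotF x L.1)
    rw [h1]
  right_inv := fun ⟨i, M⟩ => by
    have h1 : rotF i (rotF (-i) M.1) = M.1 := by
      rw [rotF_rotF, add_neg_cancel, rotF_zero]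
    exact Prod.ext rfl (Subtype.ext h1)

lemma gc_eq_mul (n : ℕ) [NeZero n] : gc SIFp n (n-1) = n * lk 1 n := by
  classical
  letI : Fintype (TL SIFp n (n-1)) := Fintype.ofFinite _
  have h3 : Nat.card (Σ L : TL SIFp n (n-1), {i : Fin n // DomN 1 (rotF i L.1)})
      = Nat.card (Fin n × LukT 1 n) := Nat.card_congr (cycEquiv n)
  rw [ncard_sigma] at h3
  have h4 : ∑ L : TL SIFp n (n-1), Nat.card {i : Fin n // DomN 1 (rotF i L.1)}
      = ∑ _L : TL SIFp n (n-1), 1 :=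
    Fintype.sum_congr _ _ fun L => card_dom_unique L.1 L.2.2
  rw [h4] at h3
  simp only [Finset.sum_const, smul_eq_mul, mul_one] at h3
  rw [Nat.card_prod, Nat.card_eq_fintype_card (α := Fin n), Fintype.card_fin] at h3
  rw [gc, Nat.card_eq_fintype_card, ← Finset.card_univ]
  exact h3

end Cycle

-- ===== list/tuple equivalence and final assembly =====

lemma map_sum_eq (l : List PPiece) :
    (l.map (fun p => p.1)).sum = ∑ i : Fin l.length, (l.get i).1 := by
  conv_lhs => rw [← List.ofFn_get l]
  rw [List.map_ofFn, List.sum_ofFn]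
  rfl

lemma ofFn_get_cast {α : Type*} {l : List α} {n : ℕ} (h : l.length = n) :
    List.ofFn (fun i : Fin n => l.get (Fin.cast h.symm i)) = l := by
  subst h
  exact List.ofFn_get l

def listEquiv (n : ℕ) [NeZero n] :
    {L : List PPiece // L.length = n ∧ (∀ p ∈ L, SIF p.2) ∧
      (L.map (fun p => p.1)).sum = n - 1} ≃ TL SIFp n (n-1) where
  toFun := fun ⟨l, h1, h2, h3⟩ => ⟨fun i => l.get (Fin.cast h1.symm i),
    fun i => h2 _ (List.mem_iff_get.mpr ⟨_, rfl⟩), by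
      show ∑ i : Fin n, (l.get (Fin.cast h1.symm i)).1 = n - 1
      rw [← h3, map_sum_eq]
      exact Fintype.sum_equiv (finCongr h1.symm) _ _ fun i => rfl⟩
  invFun := fun ⟨b, hP, hsum⟩ => ⟨List.ofFn b, by
      refine ⟨List.length_ofFn, fun p hp => ?_, ?_⟩
      · obtain ⟨i, rfl⟩ := List.mem_ofFn.mp hp
        exact hP i
      · rw [List.map_ofFn, List.sum_ofFn]
        exact hsum⟩
  left_inv := fun ⟨l, h1, h2, h3⟩ => Subtype.ext (ofFn_get_cast h1)
  right_inv := fun ⟨b, hP, hsum⟩ => by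
    apply Subtype.ext
    funext i
    show (List.ofFn b).get (Fin.cast _ i) = b i
    rw [List.get_ofFn]
    exact congrArg b (Fin.ext rfl)

end SIFProof

/-- The number of `n`-lists of SIF permutations (empty permutation allowed) of total
length `n - 1` is `n!`. -/
theorem stmt9 (n : ℕ) (hn : 1 ≤ n) :
    Nat.card {L : List (Σ m : ℕ, Equiv.Perm (Fin m)) //
      L.length = n ∧ (∀ p ∈ L, SIF p.2) ∧ (L.map (fun p => p.1)).sum = n - 1} =
      n.factorial := by
  haveI : NeZero n := ⟨by omega⟩
  rw [Nat.card_congr (listEquiv n)]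
  have h1 : Nat.card (TL SIFp n (n-1)) = n * lk 1 n := gc_eq_mul n
  have h2 : lk 1 n = gc TrueP 1 (n-1) := by
    have := LH (n-1) 1
    rw [show (n-1) + 1 = n by omega] at this
    exact this
  have h3 : gc TrueP 1 (n-1) = (n-1).factorial := by
    rw [← coeff_F_pow, pow_one, Fps, PowerSeries.coeff_mk]
  rw [h1, h2, h3]
  exact Nat.mul_factorial_pred (by omega)
end

section
/- The formal power series A(x) = Σ_{n≥0} a_n x^n, where a_n satisfies a_0 = a_1 = 1 and a_n = Σ_{j=2}^{n-2}(j-1)a_j a_{n-j} + (n-1)a_{n-1} for n ≥ 2, satisfies the identity x·A'(x)·(A(x) - 1) = (A(x) - x)·(A(x) - 1) - x as formal power series. -/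
open PowerSeries

private lemma key11 (a : ℕ → ℚ) (h0 : a 0 = 1) (h1 : a 1 = 1)
    (hrec : ∀ n : ℕ, 2 ≤ n →
      a n = (∑ j ∈ Finset.Icc 2 (n - 2), ((j : ℚ) - 1) * a j * a (n - j)) +
        ((n : ℚ) - 1) * a (n - 1)) :
    ∀ n : ℕ, 2 ≤ n →
      ∑ k ∈ Finset.range n, ((k : ℚ) - 1) * a k * a (n - k) = -(a (n - 1)) := by
  intro n hn
  obtain ⟨m, rfl⟩ : ∃ m, n = m + 2 := ⟨n - 2, by omega⟩
  have hr := hrec (m + 2) (by omega)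
  simp only [show m + 2 - 2 = m from rfl, show m + 2 - 1 = m + 1 from rfl] at hr ⊢
  rw [Finset.sum_range_succ', Finset.sum_range_succ']
  rw [show Finset.Icc 2 m = Finset.Ico 2 (m+1) by rw [Finset.Ico_add_one_right_eq_Icc], Finset.sum_Ico_eq_sum_range] at hr
  rcases m with _ | m'
  · simp only [Finset.range_zero, Finset.sum_empty] at hr ⊢
    norm_num [h0, h1] at hr ⊢
    linarith
  · rw [Finset.sum_range_succ]
    have hs : ∑ x ∈ Finset.range m', (((x + 1 + 1 : ℕ) : ℚ) * a (x + 1 + 1) *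
          a (m' + 1 + 2 - (x + 1 + 1)) - 1 * (a (x + 1 + 1) * a (m' + 1 + 2 - (x + 1 + 1)))) =
        ∑ k ∈ Finset.range (m' + 1 + 1 - 2), (((2 + k : ℕ) : ℚ) - 1) * a (2 + k) *
          a (m' + 1 + 2 - (2 + k)) := by
      apply Finset.sum_congr rfl
      intro k _
      have h2 : 2 + k = k + 1 + 1 := by omega
      rw [h2]; ring
    have hgoal : ∑ x ∈ Finset.range m', (((x + 1 + 1 : ℕ) : ℚ) - 1) * a (x + 1 + 1) *
        a (m' + 1 + 2 - (x + 1 + 1)) =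
        ∑ x ∈ Finset.range m', (((x + 1 + 1 : ℕ) : ℚ) * a (x + 1 + 1) *
          a (m' + 1 + 2 - (x + 1 + 1)) - 1 * (a (x + 1 + 1) * a (m' + 1 + 2 - (x + 1 + 1)))) := by
      apply Finset.sum_congr rfl
      intro k _
      ring
    rw [hgoal, hs]
    rw [show m' + 1 + 2 - (m' + 1 + 1) = 1 from by omega]
    rw [show m' + 1 + 2 - (0 + 1) = m' + 2 from by omega]
    rw [show m' + 1 + 2 - 0 = m' + 3 from by omega] at *
    rw [show m' + 1 + 2 = m' + 3 from by omega] at hr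
    push_cast at hr ⊢
    simp only [h0, h1]
    linarith

theorem stmt11 (a : ℕ → ℚ) (h0 : a 0 = 1) (h1 : a 1 = 1)
    (hrec : ∀ n : ℕ, 2 ≤ n →
      a n = (∑ j ∈ Finset.Icc 2 (n - 2), ((j : ℚ) - 1) * a j * a (n - j)) +
        ((n : ℚ) - 1) * a (n - 1))
    (A : PowerSeries ℚ) (hA : A = PowerSeries.mk a) :
    (PowerSeries.X : PowerSeries ℚ) * PowerSeries.derivativeFun A * (A - 1) =
      (A - PowerSeries.X) * (A - 1) - PowerSeries.X := by
  set b : ℕ → ℚ := fun k => if k = 0 then 0 else a k with hb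
  have hAb : A - 1 = PowerSeries.mk b := by
    ext k
    rcases k with _ | k
    · simp [hA, hb, h0]
    · simp [hA, hb, coeff_one]
  have hXD : (PowerSeries.X : PowerSeries ℚ) * PowerSeries.derivativeFun A =
      PowerSeries.mk (fun k => (k : ℚ) * a k) := by
    ext k
    rcases k with _ | k
    · simp
    · rw [coeff_succ_X_mul, show coeff k A.derivativeFun = coeff (k + 1) A * (k + 1) from coeff_derivative A k, coeff_mk, hA, coeff_mk]
      push_cast
      ring
  rw [hXD, hAb, hA]
  ext n
  rw [map_sub, coeff_mul, coeff_mul]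
  rw [Finset.Nat.sum_antidiagonal_eq_sum_range_succ_mk,
    Finset.Nat.sum_antidiagonal_eq_sum_range_succ_mk]
  simp only [coeff_mk, map_sub, coeff_X]
  rcases n with _ | _ | m
  · simp [hb]
  · simp [hb, h0, h1, Finset.sum_range_succ]
  · have hX : (if (m + 2 : ℕ) = 1 then (1:ℚ) else 0) = 0 := if_neg (by omega)
    rw [hX, sub_zero]
    have hsplit : ∑ k ∈ Finset.range (m + 2 + 1),
        (a k - if k = 1 then (1:ℚ) else 0) * b (m + 2 - k) =
        (∑ k ∈ Finset.range (m + 2 + 1), a k * b (m + 2 - k)) -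
        ∑ k ∈ Finset.range (m + 2 + 1), (if k = 1 then (1:ℚ) else 0) * b (m + 2 - k) := by
      rw [← Finset.sum_sub_distrib]
      apply Finset.sum_congr rfl
      intro k _
      ring
    rw [hsplit]
    have hone : ∑ k ∈ Finset.range (m + 2 + 1),
        (if k = 1 then (1:ℚ) else 0) * b (m + 2 - k) = b (m + 1) := by
      rw [Finset.sum_eq_single 1]
      · norm_num
      · intro k _ hk
        simp [hk]
      · intro h
        exact absurd (Finset.mem_range.mpr (by omega)) h
    rw [hone]
    have hmain : ∑ k ∈ Finset.range (m + 2 + 1), (k : ℚ) * a k * b (m + 2 - k) -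
        ∑ k ∈ Finset.range (m + 2 + 1), a k * b (m + 2 - k) =
        ∑ k ∈ Finset.range (m + 2), ((k : ℚ) - 1) * a k * a (m + 2 - k) := by
      rw [← Finset.sum_sub_distrib, Finset.sum_range_succ]
      have hlast : b (m + 2 - (m + 2)) = 0 := by simp [hb]
      rw [hlast]
      rw [mul_zero, mul_zero, sub_zero, add_zero]
      apply Finset.sum_congr rfl
      intro k hk
      rw [Finset.mem_range] at hk
      have : b (m + 2 - k) = a (m + 2 - k) := by
        rw [hb]
        simp only []
        rw [if_neg (by omega)]
      rw [this]
      ring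
    have hkey := key11 a h0 h1 hrec (m + 2) (by omega)
    rw [show m + 2 - 1 = m + 1 from rfl] at hkey
    have hb1 : b (m + 1) = a (m + 1) := by rw [hb]; simp
    linarith [hmain, hkey, hb1]
end
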